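/- arXiv:1809.00401 — 9 statements merged into one kernel-verified Lean document; each statement's English description precedes it below -/
import Mathlib

section
/- Let X be a compact connected Hausdorff space, let U ⊆ X be a nonempty open set with U ≠ X, and let C be a connected component of U. Then the closure of C in X intersects X \ U. -/
/-- Šura-Bura: in a compact Hausdorff space, if the connected component of a
point is contained in an open set, then some clopen set containing the point
is contained in the open set. -/
lemma exists_isClopen_subset_of_connectedComponent_subset
    {Y : Type*} [TopologicalSpace Y] [CompactSpace Y] [T2Space Y]
    {y : Y} {W : Set Y} (hW : IsOpen W) (h : connectedComponent y ⊆ W) :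
    ∃ Z : Set Y, IsClopen Z ∧ y ∈ Z ∧ Z ⊆ W := by
  let N := { s : Set Y // IsClopen s ∧ y ∈ s }
  rsuffices ⟨⟨s, hs, hs'⟩, hs''⟩ : ∃ s : N, s.val ⊆ W
  · exact ⟨s, hs, hs', hs''⟩
  haveI : Nonempty N := ⟨⟨Set.univ, isClopen_univ, Set.mem_univ y⟩⟩
  have hNcl : ∀ s : N, IsClosed s.val := fun s => s.property.1.1
  have hdir : Directed (· ⊇ ·) fun s : N => s.val := by
    rintro ⟨s, hs, hys⟩ ⟨t, ht, hyt⟩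
    exact ⟨⟨s ∩ t, hs.inter ht, ⟨hys, hyt⟩⟩, Set.inter_subset_left, Set.inter_subset_right⟩
  have hint : (⋂ s : N, s.val) ⊆ W := by
    rw [show (⋂ s : N, s.val) = connectedComponent y from
      (connectedComponent_eq_iInter_isClopen y).symm ▸ rfl]
    · exact h
  have h_nhd : ∀ z ∈ ⋂ s : N, s.val, W ∈ nhds z := fun z hz =>
    hW.mem_nhds (hint hz)
  exact exists_subset_nhds_of_compactSpace hdir hNcl h_nhd

/-- **Boundary Bumping Lemma.** Let `X` be a compact connected Hausdorff space,
`U ⊆ X` a nonempty open set with `U ≠ X`, and `C` a connected component of `U`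
(i.e. the connected component in `U` of some point `x ∈ U`). Then the closure
of `C` in `X` intersects `X \ U`. -/
theorem boundary_bumping {X : Type*} [TopologicalSpace X] [CompactSpace X]
    [ConnectedSpace X] [T2Space X]
    (U : Set X) (hUopen : IsOpen U) (hUne : U.Nonempty) (hUne_univ : U ≠ Set.univ)
    (C : Set X) (x : X) (hx : x ∈ U) (hC : C = connectedComponentIn U x) :
    (closure C ∩ (Set.univ \ U)).Nonempty := by
  by_contra h
  rw [Set.not_nonempty_iff_eq_empty] at h
  -- the closure of `C` is contained in `U`
  have hsub : closure C ⊆ U := by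
    intro y hy
    by_contra hyU
    exact Set.eq_empty_iff_forall_notMem.mp h y ⟨hy, ⟨Set.mem_univ y, hyU⟩⟩
  -- separate `closure C` from `Uᶜ` by disjoint open sets
  obtain ⟨V, W, hVo, hWo, hCV, hFW, hVW⟩ :=
    normal_separation isClosed_closure (hUopen.isClosed_compl)
      (Set.disjoint_compl_right_iff_subset.mpr hsub)
  -- shrink `V` inside `U`
  set V' := V ∩ U with hV'
  have hV'o : IsOpen V' := hVo.inter hUopen
  have hCV' : closure C ⊆ V' := fun y hy => ⟨hCV hy, hsub hy⟩
  -- the closure of `V'` is still inside `U`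
  set B := closure V' with hB
  have hBU : B ⊆ U := by
    intro y hy
    by_contra hyU
    have hyW : y ∈ W := hFW hyU
    have : Disjoint (closure V') W := (hVW.mono_left Set.inter_subset_left).closure_left hWo
    exact this.ne_of_mem hy hyW rfl
  have hxC : x ∈ C := hC ▸ mem_connectedComponentIn hx
  have hxB : x ∈ B := subset_closure (hCV' (subset_closure hxC))
  -- work in the compact Hausdorff subspace `B`
  haveI : CompactSpace B := isCompact_iff_compactSpace.mp isClosed_closure.isCompact
  set b : B := ⟨x, hxB⟩ with hb
  -- the connected component of `b` in `B` is contained in (the preimage of) `V'`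
  have hcomp : connectedComponent b ⊆ Subtype.val ⁻¹' V' := by
    intro z hz
    have himg : (z : X) ∈ connectedComponentIn B x := by
      rw [connectedComponentIn_eq_image hxB]
      exact ⟨z, hz, rfl⟩
    have h1 : connectedComponentIn B x ⊆ connectedComponentIn U x :=
      connectedComponentIn_mono x hBU
    have h2 : (z : X) ∈ C := hC ▸ h1 himg
    exact hCV' (subset_closure h2)
  -- Šura-Bura: find a clopen set `Z` in `B` with `b ∈ Z ⊆ V'`
  obtain ⟨Z, hZclopen, hbZ, hZV'⟩ :=
    exists_isClopen_subset_of_connectedComponent_subset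
      (hV'o.preimage continuous_subtype_val) hcomp
  -- transfer `Z` to a clopen subset of `X`
  set Z' : Set X := Subtype.val '' Z with hZ'
  have hZ'V' : Z' ⊆ V' := by
    rintro _ ⟨z, hz, rfl⟩
    exact hZV' hz
  have hZ'closed : IsClosed Z' := by
    have : IsCompact Z' := (hZclopen.1.isCompact).image continuous_subtype_val
    exact this.isClosed
  have hZ'open : IsOpen Z' := by
    obtain ⟨O, hOo, hOeq⟩ := isOpen_induced_iff.mp hZclopen.2
    have heq : Z' = O ∩ V' := by
      apply Set.Subset.antisymm
      · rintro _ ⟨z, hz, rfl⟩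
        refine ⟨?_, hZV' hz⟩
        have : z ∈ Subtype.val ⁻¹' O := by rw [hOeq]; exact hz
        exact this
      · rintro y ⟨hyO, hyV'⟩
        have hyB : y ∈ B := subset_closure hyV'
        refine ⟨⟨y, hyB⟩, ?_, rfl⟩
        rw [← hOeq] at *
        exact hyO
    rw [heq]
    exact hOo.inter hV'o
  -- contradiction with connectedness of `X`
  have : Z' = ∅ ∨ Z' = Set.univ := isClopen_iff.mp ⟨hZ'closed, hZ'open⟩
  rcases this with hemp | huniv
  · exact absurd hemp (Set.nonempty_iff_ne_empty.mp ⟨x, ⟨b, hbZ, rfl⟩⟩)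
  · apply hUne_univ
    apply Set.Subset.antisymm (Set.subset_univ U)
    rw [← huniv]
    exact fun y hy => (hZ'V' hy).2
end

section
/- Every Darboux injection f : [0,1) → ℝ from the half-open unit interval is a topological embedding, i.e., a homeomorphism of [0,1) onto its image with the subspace topology. -/
open Set Topology

/-- Every Darboux injection `f : [0,1) → ℝ` (an injective map sending connected sets
to connected sets) is a topological embedding. -/
theorem darboux_injection_Ico_isEmbedding (f : (Set.Ico (0:ℝ) 1) → ℝ)
    (hinj : Function.Injective f)
    (hdarboux : ∀ C : Set (Set.Ico (0:ℝ) 1), IsPreconnected C → IsPreconnected (f '' C)) :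
    Topology.IsEmbedding f := by
  have hIo : OrdConnected (Set.Ico (0:ℝ) 1) := Set.ordConnected_Ico
  -- uIcc in the subtype maps to uIcc in ℝ under the coercion
  have hcoe : ∀ a b : Set.Ico (0:ℝ) 1, (↑) '' (Set.uIcc a b) = Set.uIcc (a : ℝ) (b : ℝ) := by
    intro a b
    ext x
    constructor
    · rintro ⟨y, hy, rfl⟩
      rw [Set.mem_uIcc] at hy ⊢
      rcases hy with ⟨h1, h2⟩ | ⟨h1, h2⟩
      · exact Or.inl ⟨h1, h2⟩
      · exact Or.inr ⟨h1, h2⟩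
    · intro hx
      have hxI : x ∈ Set.Ico (0:ℝ) 1 := by
        rcases Set.mem_uIcc.1 hx with ⟨h1, h2⟩ | ⟨h1, h2⟩
        · exact hIo.out a.2 b.2 ⟨h1, h2⟩
        · exact hIo.out b.2 a.2 ⟨h1, h2⟩
      refine ⟨⟨x, hxI⟩, ?_, rfl⟩
      rw [Set.mem_uIcc] at hx ⊢
      rcases hx with ⟨h1, h2⟩ | ⟨h1, h2⟩
      · exact Or.inl ⟨h1, h2⟩
      · exact Or.inr ⟨h1, h2⟩
  -- uIcc in the subtype is preconnected
  have hpre : ∀ a b : Set.Ico (0:ℝ) 1, IsPreconnected (Set.uIcc a b) := by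
    intro a b
    rw [← Topology.IsInducing.subtypeVal.isPreconnected_image, hcoe]
    exact isPreconnected_uIcc
  -- intermediate value property
  have hIVT : ∀ a b : Set.Ico (0:ℝ) 1, Set.uIcc (f a) (f b) ⊆ f '' (Set.uIcc a b) := by
    intro a b
    have h1 := (hdarboux _ (hpre a b)).ordConnected
    exact h1.uIcc_subset ⟨a, Set.left_mem_uIcc, rfl⟩ ⟨b, Set.right_mem_uIcc, rfl⟩
  -- f is monotone or antitone
  have hmono : Monotone f ∨ Antitone f := by
    rw [monotone_or_antitone_iff_uIcc]
    intro a b c hc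
    by_contra hfc
    -- the set [[a,c]] ∩ [[c,b]] is {c}
    have hcc : ∀ u ∈ Set.uIcc a c, u ∈ Set.uIcc c b → u = c := by
      intro u hu hv
      rcases le_total a b with hab | hab
      · obtain ⟨h1, h2⟩ : a ≤ c ∧ c ≤ b := by rwa [Set.uIcc_of_le hab, Set.mem_Icc] at hc
        rw [Set.uIcc_of_le h1, Set.mem_Icc] at hu
        rw [Set.uIcc_of_le h2, Set.mem_Icc] at hv
        exact le_antisymm hu.2 hv.1
      · obtain ⟨h1, h2⟩ : b ≤ c ∧ c ≤ a := by rwa [Set.uIcc_of_ge hab, Set.mem_Icc] at hc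
        rw [Set.uIcc_of_ge h2, Set.mem_Icc] at hu
        rw [Set.uIcc_of_ge h1, Set.mem_Icc] at hv
        exact le_antisymm hv.2 hu.1
    have key : ∀ y, y ∈ Set.uIcc (f a) (f c) → y ∈ Set.uIcc (f c) (f b) → y = f c := by
      intro y h1 h2
      obtain ⟨u, hu, rfl⟩ := hIVT a c h1
      obtain ⟨v, hv, hv'⟩ := hIVT c b h2
      have huv : u = v := hinj hv'.symm
      rw [hcc u hu (huv ▸ hv)]
    rcases lt_or_ge (f c) (f a ⊓ f b) with h | h
    · obtain ⟨y, hy1, hy2⟩ := exists_between h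
      have h1 : y ∈ Set.uIcc (f a) (f c) :=
        Set.mem_uIcc.2 (Or.inr ⟨hy1.le, hy2.le.trans inf_le_left⟩)
      have h2 : y ∈ Set.uIcc (f c) (f b) :=
        Set.mem_uIcc.2 (Or.inl ⟨hy1.le, hy2.le.trans inf_le_right⟩)
      exact absurd (key y h1 h2) hy1.ne'
    rcases lt_or_ge (f a ⊔ f b) (f c) with h' | h'
    · obtain ⟨y, hy1, hy2⟩ := exists_between h'
      have h1 : y ∈ Set.uIcc (f a) (f c) :=
        Set.mem_uIcc.2 (Or.inl ⟨le_sup_left.trans hy1.le, hy2.le⟩)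
      have h2 : y ∈ Set.uIcc (f c) (f b) :=
        Set.mem_uIcc.2 (Or.inr ⟨le_sup_right.trans hy1.le, hy2.le⟩)
      exact absurd (key y h1 h2) hy2.ne
    · exact hfc ⟨h, h'⟩
  -- the range of f is order-connected
  haveI : PreconnectedSpace (Set.Ico (0:ℝ) 1) := Subtype.preconnectedSpace isPreconnected_Ico
  have hrange : OrdConnected (Set.range f) := by
    have h1 : IsPreconnected (f '' Set.univ) := hdarboux _ isPreconnected_univ
    rw [Set.image_univ] at h1
    exact h1.ordConnected
  haveI : OrdConnected (Set.Ico (0:ℝ) 1) := hIo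
  rcases hmono with hm | hm
  · exact (hm.strictMono_of_injective hinj).isEmbedding_of_ordConnected hrange
  · have hsa : StrictAnti f := hm.strictAnti_of_injective hinj
    have hsg : StrictMono (OrderDual.toDual ∘ f) := fun x y hxy => hsa hxy
    have hr : OrdConnected (Set.range (OrderDual.toDual ∘ f)) := by
      rw [Set.range_comp, Equiv.image_eq_preimage_symm]
      exact hrange.dual
    exact hsg.isEmbedding_of_ordConnected hr
end

section
/- Every Darboux injection f : [0,1] → ℝ from the closed unit interval is a topological embedding, i.e., a homeomorphism of [0,1] onto its image with the subspace topology. -/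
open Set Topology

/-- A Darboux injection on `[0,1]` has no "upward dent". -/
lemma darboux_injection_no_dent (f : (Set.Icc (0:ℝ) 1) → ℝ)
    (hinj : Function.Injective f)
    (hdarboux : ∀ C : Set (Set.Icc (0:ℝ) 1), IsPreconnected C → IsPreconnected (f '' C))
    {x y z : Set.Icc (0:ℝ) 1} (hxy : x < y) (hyz : y < z) :
    ¬ (f x < f y ∧ f z < f y) := by
  rintro ⟨hfxy, hfzy⟩
  obtain ⟨w, hw1, hw2⟩ := exists_between (max_lt hfxy hfzy)
  have hpre1 : IsPreconnected (Set.Icc x y) := by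
    rw [← IsInducing.subtypeVal.isPreconnected_image, Set.image_subtype_val_Icc]
    exact isPreconnected_Icc
  have hpre2 : IsPreconnected (Set.Icc y z) := by
    rw [← IsInducing.subtypeVal.isPreconnected_image, Set.image_subtype_val_Icc]
    exact isPreconnected_Icc
  have h1 := (hdarboux _ hpre1).ordConnected
  have h2 := (hdarboux _ hpre2).ordConnected
  have hfx : f x ∈ f '' Set.Icc x y :=
    ⟨x, Set.left_mem_Icc.2 hxy.le, rfl⟩
  have hfy1 : f y ∈ f '' Set.Icc x y :=
    ⟨y, Set.right_mem_Icc.2 hxy.le, rfl⟩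
  have hfy2 : f y ∈ f '' Set.Icc y z :=
    ⟨y, Set.left_mem_Icc.2 hyz.le, rfl⟩
  have hfz : f z ∈ f '' Set.Icc y z :=
    ⟨z, Set.right_mem_Icc.2 hyz.le, rfl⟩
  have hwmem1 : w ∈ f '' Set.Icc x y :=
    h1.out hfx hfy1 ⟨((le_max_left _ _).trans_lt hw1).le, hw2.le⟩
  have hwmem2 : w ∈ f '' Set.Icc y z :=
    h2.out hfz hfy2 ⟨((le_max_right _ _).trans_lt hw1).le, hw2.le⟩
  obtain ⟨u, hu, hfu⟩ := hwmem1
  obtain ⟨v, hv, hfv⟩ := hwmem2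
  have huv : u = v := hinj (by rw [hfu, hfv])
  have huy : u ≠ y := fun h => hw2.ne' (h ▸ hfu)
  have hlt : u < y := lt_of_le_of_ne hu.2 huy
  exact absurd huv (hlt.trans_le hv.1).ne

/-- A monotone Darboux map on `[0,1]` is continuous. -/
lemma darboux_monotone_continuous (g : (Set.Icc (0:ℝ) 1) → ℝ)
    (hmono : Monotone g)
    (hd : ∀ C : Set (Set.Icc (0:ℝ) 1), IsPreconnected C → IsPreconnected (g '' C)) :
    Continuous g := by
  set S : Set ℝ := Set.range g with hS
  have huniv : IsPreconnected (Set.univ : Set (Set.Icc (0:ℝ) 1)) := by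
    rw [← IsInducing.subtypeVal.isPreconnected_image, Set.image_univ, Subtype.range_val]
    exact isPreconnected_Icc
  have hSpre : IsPreconnected S := by
    rw [hS, ← Set.image_univ]; exact hd _ huniv
  haveI : OrdConnected S := hSpre.ordConnected
  set g' : (Set.Icc (0:ℝ) 1) → S := fun x => ⟨g x, Set.mem_range_self x⟩ with hg'
  have hmono' : Monotone g' := fun a b hab => by
    simp only [hg', Subtype.mk_le_mk]; exact hmono hab
  have hsurj : Function.Surjective g' := by
    rintro ⟨_, x, rfl⟩; exact ⟨x, rfl⟩
  have hcont' : Continuous g' := hmono'.continuous_of_surjective hsurj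
  have : g = Subtype.val ∘ g' := rfl
  rw [this]
  exact continuous_subtype_val.comp hcont'

/-- Every Darboux injection `f : [0,1] → ℝ` (an injective map sending connected sets
to connected sets) is a topological embedding. -/
theorem darboux_injection_Icc_isEmbedding (f : (Set.Icc (0:ℝ) 1) → ℝ)
    (hinj : Function.Injective f)
    (hdarboux : ∀ C : Set (Set.Icc (0:ℝ) 1), IsPreconnected C → IsPreconnected (f '' C)) :
    Topology.IsEmbedding f := by
  have hninj : Function.Injective (fun x => -(f x)) := fun a b hab =>
    hinj (neg_injective hab)
  have hndarboux : ∀ C : Set (Set.Icc (0:ℝ) 1), IsPreconnected C →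
      IsPreconnected ((fun x => -(f x)) '' C) := by
    intro C hC
    have : (fun x => -(f x)) '' C = Neg.neg '' (f '' C) := by
      rw [Set.image_image]
    rw [this]
    exact (hdarboux C hC).image _ continuous_neg.continuousOn
  have hmono : Monotone f ∨ Antitone f := by
    by_contra h
    push_neg at h
    rw [not_monotone_not_antitone_iff_exists_lt_lt] at h
    obtain ⟨a, b, c, hab, hbc, hcase⟩ := h
    rcases hcase with ⟨h1, h2⟩ | ⟨h1, h2⟩
    · exact darboux_injection_no_dent f hinj hdarboux hab hbc ⟨h1, h2⟩
    · exact darboux_injection_no_dent (fun x => -(f x)) hninj hndarboux hab hbc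
        ⟨neg_lt_neg h1, neg_lt_neg h2⟩
  have hcont : Continuous f := by
    rcases hmono with hm | ha
    · exact darboux_monotone_continuous f hm hdarboux
    · have hm' : Monotone (fun x => -(f x)) := fun a b hab => neg_le_neg (ha hab)
      have := darboux_monotone_continuous _ hm' hndarboux
      have : Continuous (fun x => -(-(f x))) := (this).neg
      simpa only [neg_neg] using this
  exact (hcont.isClosedEmbedding hinj).isEmbedding
end

section
/- Every Darboux injection f : X → ℝ from a path-connected Hausdorff topological space X to the real line is a topological embedding, i.e., a homeomorphism of X onto its image with the subspace topology. -/
open Set Topology Filter Metric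

section Aux

/-- Fibers of an injective map into ℝ are closed (in a T2, indeed T1, space). -/
private lemma darboux_fiber_closed {X : Type*} [TopologicalSpace X] [T2Space X]
    {f : X → ℝ} (hinj : Function.Injective f) (c : ℝ) :
    IsClosed (f ⁻¹' {c}) := by
  have hsub : (f ⁻¹' {c}).Subsingleton := fun x hx y hy => hinj (hx.trans hy.symm)
  rcases hsub.eq_empty_or_singleton with h | ⟨a, h⟩ <;> rw [h]
  · exact isClosed_empty
  · exact isClosed_singleton

/-- One-sided continuity for a real Darboux function with closed fibers. -/
private lemma darboux_upper {g : ℝ → ℝ}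
    (hD : ∀ s : Set ℝ, IsPreconnected s → IsPreconnected (g '' s))
    (hF : ∀ c : ℝ, IsClosed (g ⁻¹' {c})) {s₀ c : ℝ} (hc : g s₀ < c) :
    ∀ᶠ s in 𝓝 s₀, g s < c := by
  set c' := (g s₀ + c) / 2 with hc'
  have h1 : g s₀ < c' := by rw [hc']; linarith
  have h2 : c' < c := by rw [hc']; linarith
  have hopen : IsOpen (g ⁻¹' {c'})ᶜ := (hF c').isOpen_compl
  obtain ⟨η, hη, hball⟩ := Metric.isOpen_iff.mp hopen s₀ (by simp; exact h1.ne)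
  filter_upwards [Metric.ball_mem_nhds s₀ hη] with s hs
  by_contra h
  push_neg at h
  have himg := hD _ (isPreconnected_uIcc (a := s₀) (b := s))
  have hoc := himg.ordConnected
  have hcm : c' ∈ g '' uIcc s₀ s := by
    apply hoc.out (mem_image_of_mem g left_mem_uIcc) (mem_image_of_mem g right_mem_uIcc)
    exact ⟨h1.le, le_trans h2.le h⟩
  obtain ⟨t, ht, hgt⟩ := hcm
  have htb : t ∈ ball s₀ η := by
    have hsub : uIcc s₀ s ⊆ ball s₀ η :=
      (convex_ball s₀ η).ordConnected.uIcc_subset (mem_ball_self hη) hs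
    exact hsub ht
  exact (hball htb) hgt

/-- A real Darboux function with closed fibers is continuous. -/
private lemma darboux_continuous {g : ℝ → ℝ}
    (hD : ∀ s : Set ℝ, IsPreconnected s → IsPreconnected (g '' s))
    (hF : ∀ c : ℝ, IsClosed (g ⁻¹' {c})) : Continuous g := by
  rw [continuous_iff_continuousAt]
  intro s₀
  have hDneg : ∀ s : Set ℝ, IsPreconnected s → IsPreconnected ((fun t => -g t) '' s) := by
    intro s hs
    have h : (fun t => -g t) '' s = Neg.neg '' (g '' s) := by
      rw [← image_comp]; rfl
    rw [h]
    exact (hD s hs).image _ continuous_neg.continuousOn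
  have hFneg : ∀ c : ℝ, IsClosed ((fun t => -g t) ⁻¹' {c}) := by
    intro c
    have h : (fun t => -g t) ⁻¹' {c} = g ⁻¹' {-c} := by
      ext t; simp [neg_eq_iff_eq_neg]
    rw [h]; exact hF _
  refine tendsto_order.2 ⟨fun c hc => ?_, fun c hc => darboux_upper hD hF hc⟩
  have h := darboux_upper hDneg hFneg (s₀ := s₀) (c := -c) (by simpa)
  filter_upwards [h] with s hs
  linarith

variable {X : Type*} [TopologicalSpace X] [T2Space X]

/-- The composition of a Darboux injection with (the extension of) a path is continuous. -/
private lemma darboux_comp_extend_continuous {f : X → ℝ}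
    (hinj : Function.Injective f)
    (hdarboux : ∀ C : Set X, IsPreconnected C → IsPreconnected (f '' C))
    {p q : X} (γ : Path p q) : Continuous (f ∘ γ.extend) := by
  apply darboux_continuous
  · intro s hs
    rw [image_comp]
    exact hdarboux _ (hs.image _ γ.continuous_extend.continuousOn)
  · intro c
    exact (darboux_fiber_closed hinj c).preimage γ.continuous_extend

variable [PathConnectedSpace X]

/-- The preimage of a closed interval under a Darboux injection is preconnected. -/
private lemma darboux_preimage_Icc_preconnected {f : X → ℝ}
    (hinj : Function.Injective f)
    (hdarboux : ∀ C : Set X, IsPreconnected C → IsPreconnected (f '' C))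
    (p q : X) (_hpq : f p ≤ f q) :
    IsPreconnected (f ⁻¹' Icc (f p) (f q)) := by
  obtain ⟨γ⟩ := PathConnectedSpace.joined p q
  set g := f ∘ γ.extend with hgdef
  have hgcont : Continuous g := darboux_comp_extend_continuous hinj hdarboux γ
  have hg0 : g 0 = f p := by simp [hgdef]
  have hg1 : g 1 = f q := by simp [hgdef]
  set E := f ⁻¹' Icc (f p) (f q) with hE
  have hIVT : ∀ w ∈ Icc (f p) (f q), ∃ t ∈ Icc (0:ℝ) 1, γ.extend t ∈ E ∧ f (γ.extend t) = w := by
    intro w hw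
    have hw' : w ∈ g '' Icc (0:ℝ) 1 := by
      apply intermediate_value_Icc zero_le_one hgcont.continuousOn
      rw [hg0, hg1]; exact hw
    obtain ⟨t, ht, hgt⟩ := hw'
    refine ⟨t, ht, ?_, hgt⟩
    rw [hE, mem_preimage]
    rw [show f (γ.extend t) = g t from rfl, hgt]
    exact hw
  have hEsub : ∀ x ∈ E, ∃ t ∈ Icc (0:ℝ) 1, γ.extend t = x := by
    intro x hx
    obtain ⟨t, ht, _, hft⟩ := hIVT (f x) hx
    exact ⟨t, ht, hinj hft⟩
  set S := Icc (0:ℝ) 1 ∩ g ⁻¹' Icc (f p) (f q) with hS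
  have hEeq : E = γ.extend '' S := by
    ext x
    constructor
    · intro hx
      obtain ⟨t, ht, htx⟩ := hEsub x hx
      refine ⟨t, ⟨ht, ?_⟩, htx⟩
      rw [mem_preimage]
      show f (γ.extend t) ∈ _
      rw [htx]; exact hx
    · rintro ⟨t, ⟨_, ht2⟩, rfl⟩
      exact ht2
  have hScomp : IsCompact S := isCompact_Icc.inter_right (isClosed_Icc.preimage hgcont)
  have hEcomp : IsCompact E := by
    rw [hEeq]; exact hScomp.image γ.continuous_extend
  -- continuity of f on E via the quotient map S → E
  have hfE : ContinuousOn f E := by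
    have hScs : CompactSpace ↥S := isCompact_iff_compactSpace.mp hScomp
    have hmem : ∀ t : ↥S, γ.extend ↑t ∈ E := by
      intro t; rw [hEeq]; exact mem_image_of_mem _ t.2
    set σ : ↥S → ↥E := fun t => ⟨γ.extend ↑t, hmem t⟩ with hσ
    have hσc : Continuous σ :=
      Continuous.subtype_mk (γ.continuous_extend.comp continuous_subtype_val) _
    have hσs : Function.Surjective σ := by
      rintro ⟨x, hx⟩
      rw [hEeq] at hx
      obtain ⟨t, htS, htx⟩ := hx
      exact ⟨⟨t, htS⟩, Subtype.ext htx⟩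
    have hq : Topology.IsQuotientMap σ := hσc.isClosedMap.isQuotientMap hσc hσs
    rw [continuousOn_iff_continuous_restrict, hq.continuous_iff]
    show Continuous fun t : ↥S => g ↑t
    exact hgcont.comp continuous_subtype_val
  -- preconnectedness
  intro u v hu hv hcov hne1 hne2
  by_contra hcon
  rw [not_nonempty_iff_eq_empty] at hcon
  have hdisj : ∀ x ∈ E, x ∉ u ∨ x ∉ v := by
    intro x hx
    by_contra hcc
    push_neg at hcc
    exact absurd hcon (Nonempty.ne_empty ⟨x, hx, hcc.1, hcc.2⟩)
  set F₁ := f '' (E \ v) with hF₁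
  set F₂ := f '' (E \ u) with hF₂
  have hF₁c : IsClosed F₁ :=
    ((hEcomp.diff hv).image_of_continuousOn (hfE.mono diff_subset)).isClosed
  have hF₂c : IsClosed F₂ :=
    ((hEcomp.diff hu).image_of_continuousOn (hfE.mono diff_subset)).isClosed
  have hcov' : Icc (f p) (f q) ⊆ F₁ ∪ F₂ := by
    intro w hw
    obtain ⟨t, _, hxE, hfx⟩ := hIVT w hw
    rcases hdisj _ hxE with h | h
    · exact Or.inr ⟨_, ⟨hxE, h⟩, hfx⟩
    · exact Or.inl ⟨_, ⟨hxE, h⟩, hfx⟩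
  have hne1' : (Icc (f p) (f q) ∩ F₁).Nonempty := by
    obtain ⟨x₁, hx₁E, hx₁u⟩ := hne1
    have hnv : x₁ ∉ v := by
      rcases hdisj _ hx₁E with h | h
      · exact absurd hx₁u h
      · exact h
    exact ⟨f x₁, hx₁E, ⟨x₁, ⟨hx₁E, hnv⟩, rfl⟩⟩
  have hne2' : (Icc (f p) (f q) ∩ F₂).Nonempty := by
    obtain ⟨x₂, hx₂E, hx₂v⟩ := hne2
    have hnu : x₂ ∉ u := by
      rcases hdisj _ hx₂E with h | h
      · exact h
      · exact absurd hx₂v h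
    exact ⟨f x₂, hx₂E, ⟨x₂, ⟨hx₂E, hnu⟩, rfl⟩⟩
  obtain ⟨w, _, hw1, hw2⟩ :=
    isPreconnected_closed_iff.mp isPreconnected_Icc F₁ F₂ hF₁c hF₂c hcov' hne1' hne2'
  obtain ⟨y₁, ⟨hy₁E, hy₁v⟩, hy₁w⟩ := hw1
  obtain ⟨y₂, ⟨hy₂E, hy₂u⟩, hy₂w⟩ := hw2
  have hy : y₁ = y₂ := hinj (hy₁w.trans hy₂w.symm)
  rcases hcov hy₁E with h | h
  · exact hy₂u (hy ▸ h)
  · exact hy₁v h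

/-- The preimage of a closed ray under a Darboux injection is preconnected. -/
private lemma darboux_ray_preconnected {f : X → ℝ}
    (hinj : Function.Injective f)
    (hdarboux : ∀ C : Set X, IsPreconnected C → IsPreconnected (f '' C))
    (c : ℝ) : IsPreconnected (f ⁻¹' Ici c) := by
  apply isPreconnected_of_forall_pair
  intro x hx y hy
  rcases le_total (f x) (f y) with h | h
  · exact ⟨f ⁻¹' Icc (f x) (f y), fun z hz => le_trans hx hz.1, ⟨le_refl _, h⟩, ⟨h, le_refl _⟩,
      darboux_preimage_Icc_preconnected hinj hdarboux x y h⟩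
  · exact ⟨f ⁻¹' Icc (f y) (f x), fun z hz => le_trans hy hz.1, ⟨h, le_refl _⟩, ⟨le_refl _, h⟩,
      darboux_preimage_Icc_preconnected hinj hdarboux y x h⟩

/-- One-sided continuity of a Darboux injection. -/
private lemma darboux_eventually_lt {f : X → ℝ}
    (hinj : Function.Injective f)
    (hdarboux : ∀ C : Set X, IsPreconnected C → IsPreconnected (f '' C))
    (x₀ : X) (c : ℝ) (hc : f x₀ < c) : ∀ᶠ x in 𝓝 x₀, f x < c := by
  by_contra h
  rw [Filter.not_eventually] at h
  have hcl : x₀ ∈ closure (f ⁻¹' Ici c) :=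
    mem_closure_iff_frequently.mpr (h.mono fun x hx => not_lt.mp hx)
  have hne : (f ⁻¹' Ici c).Nonempty := by
    obtain ⟨y, hy⟩ := h.exists
    exact ⟨y, not_lt.mp hy⟩
  have hS := darboux_ray_preconnected hinj hdarboux c
  have hT : IsPreconnected (insert x₀ (f ⁻¹' Ici c)) :=
    hS.subset_closure (subset_insert _ _) (insert_subset_iff.mpr ⟨hcl, subset_closure⟩)
  have himg := hdarboux _ hT
  have hoc := himg.ordConnected
  obtain ⟨y, hy⟩ := hne
  have hyc : c ≤ f y := hy
  have hmem : (f x₀ + c) / 2 ∈ f '' insert x₀ (f ⁻¹' Ici c) := by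
    apply hoc.out (mem_image_of_mem f (mem_insert _ _))
      (mem_image_of_mem f (mem_insert_of_mem _ hy))
    constructor <;> [linarith; linarith]
  obtain ⟨z, hz, hfz⟩ := hmem
  rcases hz with rfl | hz
  · linarith
  · have hcz : c ≤ f z := hz
    linarith

end Aux

/-- Every Darboux injection `f : X → ℝ` from a path-connected Hausdorff space
(an injective map sending connected sets to connected sets) is a topological embedding. -/
theorem darboux_injection_pathConnected_isEmbedding {X : Type*} [TopologicalSpace X]
    [PathConnectedSpace X] [T2Space X] (f : X → ℝ)
    (hinj : Function.Injective f)
    (hdarboux : ∀ C : Set X, IsPreconnected C → IsPreconnected (f '' C)) :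
    Topology.IsEmbedding f := by
  have hinjneg : Function.Injective (fun x => -f x) := fun a b h => hinj (neg_injective h)
  have hdarbneg : ∀ C : Set X, IsPreconnected C → IsPreconnected ((fun x => -f x) '' C) := by
    intro C hC
    have h : (fun x => -f x) '' C = Neg.neg '' (f '' C) := by rw [← image_comp]; rfl
    rw [h]
    exact (hdarboux C hC).image _ continuous_neg.continuousOn
  have hcont : Continuous f := by
    rw [continuous_iff_continuousAt]
    intro x₀
    refine tendsto_order.2 ⟨fun c hc => ?_, fun c hc => darboux_eventually_lt hinj hdarboux x₀ c hc⟩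
    have h := darboux_eventually_lt hinjneg hdarbneg x₀ (-c) (by simpa)
    filter_upwards [h] with x hx
    linarith
  refine ⟨?_, hinj⟩
  rw [Topology.isInducing_iff_nhds]
  intro x₀
  refine le_antisymm ((hcont.tendsto x₀).le_comap) ?_
  rw [Filter.le_def]
  intro U hU
  obtain ⟨W, hWU, hWopen, hx₀W⟩ := mem_nhds_iff.mp hU
  -- choose bounds a, b
  obtain ⟨a, δa, hδa, hA⟩ : ∃ a δa, 0 < δa ∧ ∀ x : X, f x₀ - δa < f x → f a ≤ f x := by
    by_cases h : ∃ y, f y < f x₀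
    · obtain ⟨y, hy⟩ := h
      exact ⟨y, f x₀ - f y, by linarith, fun x hx => by linarith⟩
    · push_neg at h
      exact ⟨x₀, 1, one_pos, fun x _ => h x⟩
  obtain ⟨b, δb, hδb, hB⟩ : ∃ b δb, 0 < δb ∧ ∀ x : X, f x < f x₀ + δb → f x ≤ f b := by
    by_cases h : ∃ y, f x₀ < f y
    · obtain ⟨y, hy⟩ := h
      exact ⟨y, f y - f x₀, by linarith, fun x hx => by linarith⟩
    · push_neg at h
      exact ⟨x₀, 1, one_pos, fun x _ => h x⟩
  obtain ⟨γ⟩ := PathConnectedSpace.joined a b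
  set g := f ∘ γ.extend with hgdef
  have hgcont : Continuous g := darboux_comp_extend_continuous hinj hdarboux γ
  set D := Icc (0:ℝ) 1 ∩ γ.extend ⁻¹' Wᶜ with hD
  have hDcomp : IsCompact D :=
    isCompact_Icc.inter_right (hWopen.isClosed_compl.preimage γ.continuous_extend)
  have himgD : IsCompact (g '' D) := hDcomp.image hgcont
  have hnotin : f x₀ ∈ (g '' D)ᶜ := by
    rintro ⟨t, ⟨_, htW⟩, hgt⟩
    exact htW (by rw [hinj hgt]; exact hx₀W)
  obtain ⟨δ₁, hδ₁, hball⟩ := Metric.isOpen_iff.mp himgD.isClosed.isOpen_compl (f x₀) hnotin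
  refine mem_comap.mpr ⟨Metric.ball (f x₀) (min (min δa δb) δ₁),
    Metric.ball_mem_nhds _ (by positivity), ?_⟩
  intro x hx
  rw [mem_preimage, Metric.mem_ball, Real.dist_eq] at hx
  have habs := abs_lt.mp hx
  have hmina : min (min δa δb) δ₁ ≤ δa := le_trans (min_le_left _ _) (min_le_left _ _)
  have hminb : min (min δa δb) δ₁ ≤ δb := le_trans (min_le_left _ _) (min_le_right _ _)
  have h1 : f a ≤ f x := hA x (by linarith [habs.1])
  have h2 : f x ≤ f b := hB x (by linarith [habs.2])
  have hxg : f x ∈ g '' Icc (0:ℝ) 1 := by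
    apply intermediate_value_Icc zero_le_one hgcont.continuousOn
    simpa [hgdef] using (⟨h1, h2⟩ : f x ∈ Icc (f a) (f b))
  obtain ⟨t, ht01, hgt⟩ := hxg
  have hxt : γ.extend t = x := hinj hgt
  apply hWU
  by_contra hxW
  have htD : t ∈ D := ⟨ht01, by rw [mem_preimage, hxt]; exact hxW⟩
  have hgtD : g t ∈ g '' D := mem_image_of_mem g htD
  rw [hgt] at hgtD
  refine absurd hgtD (hball ?_)
  rw [Metric.mem_ball, Real.dist_eq]
  exact lt_of_lt_of_le hx (min_le_right _ _)
end

section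
/- Let f : X → S¹ be a Darboux injection from a compact connected Hausdorff space X to the circle S¹. Then for every point x ∈ X the subspace X \ {x} has at most two connected components; moreover, for every connected component C of X \ {x}, the point x belongs to the closure of C in X and f(x) belongs to the closure of f(C) in S¹. -/
open Set

/-- Šura-Bura: a connected component in a compact Hausdorff space contained in an open set
is contained in a clopen subset of the open set. -/
lemma exists_isClopen_of_connectedComponent_subset {α : Type*} [TopologicalSpace α] [T2Space α]
    [CompactSpace α] (y : α) {U : Set α} (hU : IsOpen U) (h : connectedComponent y ⊆ U) :
    ∃ Z : Set α, IsClopen Z ∧ y ∈ Z ∧ Z ⊆ U := by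
  have H1 := hU.isClosed_compl.isCompact.inter_iInter_nonempty
    (fun s : { s : Set α // IsClopen s ∧ y ∈ s } => (s : Set α)) fun s => s.2.1.1
  rw [← not_disjoint_iff_nonempty_inter, imp_not_comm, not_forall] at H1
  have hdisj : Disjoint Uᶜ (⋂ s : { s : Set α // IsClopen s ∧ y ∈ s }, (s : Set α)) := by
    rw [← connectedComponent_eq_iInter_isClopen]
    exact disjoint_compl_left_iff_subset.2 h
  obtain ⟨si, H2⟩ := H1 hdisj
  refine ⟨⋂ s ∈ si, (s : Set α), isClopen_biInter_finset fun s _ => s.2.1,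
    mem_iInter₂.2 fun s _ => s.2.2, ?_⟩
  rw [← disjoint_compl_left_iff_subset, disjoint_iff_inter_eq_empty, ← not_nonempty_iff_eq_empty]
  exact H2

/-- Boundary bumping: in a compact connected Hausdorff space, the closure of every connected
component of the complement of a point contains that point. -/
lemma mem_closure_connectedComponentIn_compl {X : Type*} [TopologicalSpace X] [CompactSpace X]
    [ConnectedSpace X] [T2Space X] {x y : X} (hy : y ≠ x) :
    x ∈ closure (connectedComponentIn {x}ᶜ y) := by
  set C := connectedComponentIn ({x}ᶜ : Set X) y with hCdef
  have hyx : y ∈ ({x}ᶜ : Set X) := by simpa using hy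
  by_contra hx
  have hyC : y ∈ C := mem_connectedComponentIn hyx
  have hCpre : IsPreconnected C := isPreconnected_connectedComponentIn
  have hCx : C ⊆ {x}ᶜ := connectedComponentIn_subset _ _
  have hclC : closure C ⊆ C := by
    apply IsPreconnected.subset_connectedComponentIn hCpre.closure (subset_closure hyC)
    intro z hz
    rcases eq_or_ne z x with rfl | h
    · exact absurd hz hx
    · simpa using h
  have hCclosed : IsClosed C := isClosed_of_closure_subset hclC
  obtain ⟨V, W, hV, hW, hCV, hxW, hVW⟩ :=
    SeparatedNhds.of_isCompact_isCompact (hCclosed.isCompact) isCompact_singleton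
      (by rw [disjoint_singleton_right]; exact fun hxC => hCx hxC rfl)
  have hclVx : closure V ⊆ {x}ᶜ := by
    have : Disjoint (closure V) W := hVW.closure_left hW
    intro z hz hzx
    simp only [mem_singleton_iff] at hzx
    exact this.ne_of_mem hz (hxW (by simp [hzx])) rfl
  set K := closure V with hKdef
  have hKcomp : IsCompact K := isClosed_closure.isCompact
  haveI : CompactSpace K := isCompact_iff_compactSpace.mp hKcomp
  have hVK : V ⊆ K := subset_closure
  have hCK : C ⊆ K := hCV.trans hVK
  have hCeq : connectedComponentIn K y = C := by
    apply Subset.antisymm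
    · exact IsPreconnected.subset_connectedComponentIn isPreconnected_connectedComponentIn
        (mem_connectedComponentIn (hCK hyC)) ((connectedComponentIn_subset _ _).trans hclVx)
    · exact hCpre.subset_connectedComponentIn hyC hCK
  set y' : K := ⟨y, hCK hyC⟩ with hy'def
  have himg : (↑) '' connectedComponent y' = C := by
    rw [← hCeq, connectedComponentIn_eq_image (hCK hyC)]
  have hsub : connectedComponent y' ⊆ ((↑) : K → X) ⁻¹' V := by
    intro z hz
    have : (z : X) ∈ C := himg ▸ mem_image_of_mem _ hz
    exact hCV this
  obtain ⟨Z, hZclopen, hyZ, hZV⟩ := exists_isClopen_of_connectedComponent_subset y'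
    (hV.preimage continuous_subtype_val) hsub
  set Z' : Set X := (↑) '' Z with hZ'def
  have hZ'V : Z' ⊆ V := by
    rintro _ ⟨z, hz, rfl⟩
    exact hZV hz
  have hZ'closed : IsClosed Z' := ((hZclopen.isClosed.isCompact).image
    continuous_subtype_val).isClosed
  have hZ'open : IsOpen Z' := by
    obtain ⟨O, hO, hOeq⟩ := isOpen_induced_iff.mp hZclopen.isOpen
    have : Z' = O ∩ V := by
      apply Subset.antisymm
      · rintro _ ⟨z, hz, rfl⟩
        refine ⟨?_, hZV hz⟩
        rw [← hOeq] at hz; exact hz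
      · rintro z ⟨hzO, hzV⟩
        exact ⟨⟨z, hVK hzV⟩, show (⟨z, hVK hzV⟩ : K) ∈ Z from hOeq ▸ hzO, rfl⟩
    rw [this]; exact hO.inter hV
  have := isClopen_iff.mp ⟨hZ'closed, hZ'open⟩
  rcases this with h0 | huniv
  · have hmem : (y' : X) ∈ Z' := mem_image_of_mem _ hyZ
    rw [h0] at hmem
    exact hmem
  · have : x ∈ Z' := huniv ▸ mem_univ x
    exact hclVx (hVK (hZ'V this)) rfl

/-- If `x` is in the closure of the component, a Darboux injection pushes this to the image. -/
lemma fx_mem_closure_image_aux {X : Type*} [TopologicalSpace X] {Y : Type*} [TopologicalSpace Y]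
    [T1Space Y] {f : X → Y} (hinj : Function.Injective f)
    (hdarboux : ∀ C : Set X, IsPreconnected C → IsPreconnected (f '' C)) {x y : X}
    (hy : y ≠ x) (hx : x ∈ closure (connectedComponentIn {x}ᶜ y)) :
    f x ∈ closure (f '' connectedComponentIn {x}ᶜ y) := by
  set C := connectedComponentIn ({x}ᶜ : Set X) y with hCdef
  have hyC : y ∈ C := mem_connectedComponentIn (by simpa using hy)
  have hCpre : IsPreconnected C := isPreconnected_connectedComponentIn
  have hins : IsPreconnected (insert x C) :=
    hCpre.subset_closure (subset_insert _ _) (insert_subset hx subset_closure)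
  have himg : IsPreconnected (f '' insert x C) := hdarboux _ hins
  rw [image_insert_eq] at himg
  by_contra hfx
  have hfxC : f x ∉ f '' C := by
    rintro ⟨c, hc, hcf⟩
    exact (connectedComponentIn_subset _ _ hc) (by simpa using hinj hcf)
  have hcover : insert (f x) (f '' C) ⊆ (closure (f '' C))ᶜ ∪ {f x}ᶜ := by
    rintro z (rfl | hz)
    · exact Or.inl hfx
    · exact Or.inr (fun h => hfxC (by rw [mem_singleton_iff] at h; rw [← h]; exact hz))
  obtain ⟨z, hzs, hz1, hz2⟩ := himg _ _ isClosed_closure.isOpen_compl isOpen_compl_singleton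
    hcover ⟨f x, mem_insert _ _, hfx⟩
    ⟨f y, mem_insert_of_mem _ (mem_image_of_mem f hyC),
      fun h => hy (hinj (by rwa [mem_singleton_iff] at h))⟩
  rcases hzs with rfl | hzC
  · exact hz2 rfl
  · exact hz1 (subset_closure hzC)

lemma inter_of_not_bddAbove {A B : Set ℝ} (hA : IsPreconnected A) (hB : IsPreconnected B)
    (hA' : ¬BddAbove A) (hB' : ¬BddAbove B) : (A ∩ B).Nonempty := by
  rw [not_bddAbove_iff] at hA' hB'
  obtain ⟨a, ha, -⟩ := hA' 0
  obtain ⟨b, hb, -⟩ := hB' 0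
  obtain ⟨a', ha', haa⟩ := hA' (max a b)
  obtain ⟨b', hb', hbb⟩ := hB' (max a b)
  exact ⟨max a b, hA.ordConnected.out ha ha' ⟨le_max_left _ _, haa.le⟩,
    hB.ordConnected.out hb hb' ⟨le_max_right _ _, hbb.le⟩⟩

lemma inter_of_not_bddBelow {A B : Set ℝ} (hA : IsPreconnected A) (hB : IsPreconnected B)
    (hA' : ¬BddBelow A) (hB' : ¬BddBelow B) : (A ∩ B).Nonempty := by
  rw [not_bddBelow_iff] at hA' hB'
  obtain ⟨a, ha, -⟩ := hA' 0
  obtain ⟨b, hb, -⟩ := hB' 0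
  obtain ⟨a', ha', haa⟩ := hA' (min a b)
  obtain ⟨b', hb', hbb⟩ := hB' (min a b)
  exact ⟨min a b, hA.ordConnected.out ha' ha ⟨haa.le, min_le_left _ _⟩,
    hB.ordConnected.out hb' hb ⟨hbb.le, min_le_right _ _⟩⟩

/-- Let `f : X → S¹` be a Darboux injection from a compact connected Hausdorff space `X`
to the circle. Then for every `x ∈ X` the subspace `X \ {x}` has at most two connected
components, and every connected component `C` of `X \ {x}` satisfies `x ∈ closure C`
and `f x ∈ closure (f '' C)`. -/
theorem darboux_injection_to_circle_components {X : Type*} [TopologicalSpace X]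
    [CompactSpace X] [ConnectedSpace X] [T2Space X]
    (f : X → (Metric.sphere (0 : EuclideanSpace ℝ (Fin 2)) 1))
    (hinj : Function.Injective f)
    (hdarboux : ∀ C : Set X, IsPreconnected C → IsPreconnected (f '' C)) (x : X) :
    (∀ y₁ y₂ y₃, y₁ ≠ x → y₂ ≠ x → y₃ ≠ x →
      connectedComponentIn {x}ᶜ y₁ = connectedComponentIn {x}ᶜ y₂ ∨
      connectedComponentIn {x}ᶜ y₁ = connectedComponentIn {x}ᶜ y₃ ∨
      connectedComponentIn {x}ᶜ y₂ = connectedComponentIn {x}ᶜ y₃) ∧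
    (∀ y, y ≠ x → x ∈ closure (connectedComponentIn {x}ᶜ y) ∧
      f x ∈ closure (f '' connectedComponentIn {x}ᶜ y)) := by
  have hpart2 : ∀ y, y ≠ x → x ∈ closure (connectedComponentIn {x}ᶜ y) ∧
      f x ∈ closure (f '' connectedComponentIn {x}ᶜ y) := by
    intro y hy
    have h1 := mem_closure_connectedComponentIn_compl hy
    exact ⟨h1, fx_mem_closure_image_aux hinj hdarboux hy h1⟩
  refine ⟨?_, hpart2⟩
  haveI : Fact (Module.finrank ℝ (EuclideanSpace ℝ (Fin 2)) = 1 + 1) := ⟨by simp⟩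
  set v : Metric.sphere (0 : EuclideanSpace ℝ (Fin 2)) 1 := f x with hv
  set φ := stereographic' 1 v with hφ
  set ψ : EuclideanSpace ℝ (Fin 1) ≃ₜ ℝ :=
    (EuclideanSpace.equiv (Fin 1) ℝ).toHomeomorph.trans (Homeomorph.funUnique (Fin 1) ℝ) with hψ
  set g : Metric.sphere (0 : EuclideanSpace ℝ (Fin 2)) 1 → ℝ := fun z => ψ (φ z) with hg
  have hφsource : φ.source = {v}ᶜ := stereographic'_source v
  set B : X → Set ℝ := fun y => g '' (f '' connectedComponentIn {x}ᶜ y) with hB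
  have hDsub : ∀ y : X, f '' connectedComponentIn {x}ᶜ y ⊆ {v}ᶜ := by
    rintro y _ ⟨z, hz, rfl⟩ hzv
    rw [mem_singleton_iff] at hzv
    exact (connectedComponentIn_subset _ _ hz) (by simpa using hinj (hv ▸ hzv))
  have hBpre : ∀ y : X, IsPreconnected (B y) := by
    intro y
    exact IsPreconnected.image (hdarboux _ isPreconnected_connectedComponentIn) _
      (ψ.continuous.comp_continuousOn (φ.continuousOn.mono (by rw [hφsource]; exact hDsub y)))
  -- B y is unbounded (above or below)
  have hBunbdd : ∀ y : X, y ≠ x → ¬BddAbove (B y) ∨ ¬BddBelow (B y) := by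
    intro y hy
    by_contra hcon
    push_neg at hcon
    obtain ⟨hab, hbb⟩ := hcon
    have hbdd : Bornology.IsBounded (B y) := isBounded_iff_bddBelow_bddAbove.mpr ⟨hbb, hab⟩
    have hKc : IsCompact (closure (B y)) := hbdd.isCompact_closure
    have hφc : Continuous φ.symm := by
      have := φ.continuousOn_symm
      rw [stereographic'_target] at this
      exact continuousOn_univ.mp this
    set K := φ.symm '' (ψ.symm '' closure (B y)) with hK
    have hKcomp : IsCompact K := (hKc.image ψ.symm.continuous).image hφc
    have hKv : v ∉ K := by
      rintro ⟨u, hu, hval⟩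
      have humem : u ∈ φ.target := by rw [stereographic'_target]; trivial
      have := φ.map_target humem
      rw [hval, hφsource] at this
      exact this rfl
    have hsubK : f '' connectedComponentIn {x}ᶜ y ⊆ K := by
      intro w hw
      have hwsource : w ∈ φ.source := by rw [hφsource]; exact hDsub y hw
      refine ⟨ψ.symm (g w), ⟨g w, subset_closure (mem_image_of_mem g hw), rfl⟩, ?_⟩
      rw [hg]
      simp only [Homeomorph.symm_apply_apply]
      exact φ.left_inv hwsource
    have hKclosed : IsClosed K := hKcomp.isClosed
    have : f x ∈ K := hKclosed.closure_subset ((closure_mono hsubK) (hpart2 y hy).2)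
    exact hKv (hv ▸ this)
  -- distinct components have disjoint B's
  have hkey : ∀ y z : X, ((B y) ∩ (B z)).Nonempty →
      connectedComponentIn ({x}ᶜ : Set X) y = connectedComponentIn {x}ᶜ z := by
    rintro y z ⟨t, hty, htz⟩
    obtain ⟨wy, hwy, hwyt⟩ := hty
    obtain ⟨wz, hwz, hwzt⟩ := htz
    have hweq : wy = wz := by
      have h1 : φ wy = φ wz := ψ.injective (hwyt.trans hwzt.symm)
      exact φ.injOn (by rw [hφsource]; exact hDsub y hwy)
        (by rw [hφsource]; exact hDsub z hwz) h1
    obtain ⟨py, hpy, hpyw⟩ := hwy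
    obtain ⟨pz, hpz, hpzw⟩ := hwz
    have hpeq : py = pz := hinj (by rw [hpyw, hpzw, hweq])
    rw [connectedComponentIn_eq hpy, hpeq, ← connectedComponentIn_eq hpz]
  intro y₁ y₂ y₃ h1 h2 h3
  rcases hBunbdd y₁ h1 with a1 | b1 <;> rcases hBunbdd y₂ h2 with a2 | b2 <;>
    rcases hBunbdd y₃ h3 with a3 | b3
  · exact Or.inl (hkey _ _ (inter_of_not_bddAbove (hBpre y₁) (hBpre y₂) a1 a2))
  · exact Or.inl (hkey _ _ (inter_of_not_bddAbove (hBpre y₁) (hBpre y₂) a1 a2))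
  · exact Or.inr (Or.inl (hkey _ _ (inter_of_not_bddAbove (hBpre y₁) (hBpre y₃) a1 a3)))
  · exact Or.inr (Or.inr (hkey _ _ (inter_of_not_bddBelow (hBpre y₂) (hBpre y₃) b2 b3)))
  · exact Or.inr (Or.inr (hkey _ _ (inter_of_not_bddAbove (hBpre y₂) (hBpre y₃) a2 a3)))
  · exact Or.inr (Or.inl (hkey _ _ (inter_of_not_bddBelow (hBpre y₁) (hBpre y₃) b1 b3)))
  · exact Or.inl (hkey _ _ (inter_of_not_bddBelow (hBpre y₁) (hBpre y₂) b1 b2))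
  · exact Or.inl (hkey _ _ (inter_of_not_bddBelow (hBpre y₁) (hBpre y₂) b1 b2))
end

section
/- If a connected compact Hausdorff space X admits a Darboux injection f : X → S¹ into the circle, then X is locally connected. -/
open Set Complex

/-- If a connected space minus a point is separated into opens `U, V`,
then `U ∪ {x}` is preconnected. -/
lemma darboux_aux_union_singleton_preconnected {Y : Type*} [TopologicalSpace Y]
    [PreconnectedSpace Y] {U V : Set Y} {x : Y} (hU : IsOpen U) (hV : IsOpen V)
    (hdisj : U ∩ V = ∅) (hcover : U ∪ V = {x}ᶜ) : IsPreconnected (U ∪ {x}) := by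
  have hxU : x ∉ U := by
    intro h
    have : x ∈ ({x}ᶜ : Set Y) := hcover ▸ mem_union_left V h
    exact this rfl
  have key : ∀ O₁ O₂ : Set Y, IsOpen O₁ → IsOpen O₂ → U ∪ {x} ⊆ O₁ ∪ O₂ → x ∈ O₁ →
      ((U ∪ {x}) ∩ O₂).Nonempty → ((U ∪ {x}) ∩ (O₁ ∩ O₂)).Nonempty := by
    intro O₁ O₂ h1 h2 hsub hxO1 hne2
    by_contra hemp
    rw [not_nonempty_iff_eq_empty] at hemp
    have hxO2 : x ∉ O₂ := by
      intro h
      have : x ∈ (U ∪ {x}) ∩ (O₁ ∩ O₂) := ⟨Or.inr rfl, hxO1, h⟩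
      rw [hemp] at this; exact this
    set B : Set Y := U ∩ O₂ with hB
    have hBne : B.Nonempty := by
      obtain ⟨z, hz1, hz2⟩ := hne2
      rcases hz1 with hz1 | hz1
      · exact ⟨z, hz1, hz2⟩
      · exact absurd (hz1 ▸ hz2) hxO2
    have hBopen : IsOpen B := hU.inter h2
    have hBc : Bᶜ = V ∪ O₁ := by
      ext z
      simp only [mem_compl_iff, mem_union, hB, mem_inter_iff, not_and]
      constructor
      · intro hz
        by_cases hzx : z = x
        · exact Or.inr (hzx ▸ hxO1)
        · have hz' : z ∈ U ∪ V := by rw [hcover]; exact hzx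
          rcases hz' with hz' | hz'
          · rcases hsub (Or.inl hz') with h | h
            · exact Or.inr h
            · exact absurd (hz hz') (by simp [h])
          · exact Or.inl hz'
      · rintro (hz | hz) hzU
        · intro _
          have : z ∈ U ∩ V := ⟨hzU, hz⟩
          rw [hdisj] at this; exact this
        · intro hzO2
          have : z ∈ (U ∪ {x}) ∩ (O₁ ∩ O₂) := ⟨Or.inl hzU, hz, hzO2⟩
          rw [hemp] at this; exact this
    have hBclosed : IsClosed B := by
      rw [← isOpen_compl_iff, hBc]; exact hV.union h1
    have : B = ∅ ∨ B = univ := isClopen_iff.mp ⟨hBclosed, hBopen⟩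
    rcases this with h | h
    · rw [h] at hBne; exact hBne.ne_empty rfl
    · have : x ∈ B := h ▸ mem_univ x
      exact hxU this.1
  intro O₁ O₂ h1 h2 hsub hne1 hne2
  rcases hsub (Or.inr rfl) with hx | hx
  · exact key O₁ O₂ h1 h2 hsub hx hne2
  · obtain ⟨z, hzU, hz1, hz2⟩ := key O₂ O₁ h2 h1 (by rwa [union_comm O₁ O₂] at hsub) hx hne1
    exact ⟨z, hzU, hz2, hz1⟩

lemma darboux_isOpen_lt {Y : Type*} [TopologicalSpace Y] [PreconnectedSpace Y] [T1Space Y]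
    {g : Y → ℝ} (hinj : Function.Injective g)
    (hdar : ∀ C : Set Y, IsPreconnected C → IsPreconnected (g '' C)) (s : ℝ) :
    IsOpen {y | g y < s} := by
  rcases eq_empty_or_nonempty {y | g y < s} with hE | ⟨e₀, he₀⟩
  · rw [hE]; exact isOpen_empty
  rcases eq_empty_or_nonempty {y | s < g y} with hF | ⟨f₀, hf₀⟩
  · have heq : {y | g y < s} = {y | g y = s}ᶜ := by
      ext y
      simp only [mem_setOf_eq, mem_compl_iff]
      constructor
      · exact fun h => ne_of_lt h
      · intro h
        rcases lt_trichotomy (g y) s with h' | h' | h'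
        · exact h'
        · exact absurd h' h
        · exact absurd h' (by simpa using eq_empty_iff_forall_notMem.mp hF y)
    rw [heq, isOpen_compl_iff]
    rcases eq_empty_or_nonempty {y | g y = s} with h0 | ⟨x₀, hx₀⟩
    · rw [h0]; exact isClosed_empty
    · have : {y | g y = s} = {x₀} := by
        ext y
        simp only [mem_setOf_eq, mem_singleton_iff]
        exact ⟨fun h => hinj (h.trans hx₀.symm), fun h => h ▸ hx₀⟩
      rw [this]; exact isClosed_singleton
  -- main case : both sides nonempty
  simp only [mem_setOf_eq] at he₀ hf₀
  have huniv := hdar univ isPreconnected_univ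
  obtain ⟨x₀, -, hgx₀⟩ : s ∈ g '' univ :=
    huniv.ordConnected.out ⟨e₀, mem_univ _, rfl⟩ ⟨f₀, mem_univ _, rfl⟩ ⟨he₀.le, hf₀.le⟩
  have key_ne : ∀ y : Y, y ≠ x₀ ↔ g y ≠ s :=
    fun y => ⟨fun h h' => h (hinj (h'.trans hgx₀.symm)), fun h h' => h (h' ▸ hgx₀)⟩
  have hZdisc : ¬ IsPreconnected ({x₀}ᶜ : Set Y) := by
    intro hc
    have himg := hdar _ hc
    have hmem : ∀ w : Y, g w ≠ s → g w ∈ g '' ({x₀}ᶜ : Set Y) :=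
      fun w hw => ⟨w, (key_ne w).mpr hw, rfl⟩
    obtain ⟨z, hzZ, hzs⟩ : s ∈ g '' ({x₀}ᶜ : Set Y) :=
      himg.ordConnected.out (hmem e₀ (ne_of_lt he₀)) (hmem f₀ (ne_of_gt hf₀)) ⟨he₀.le, hf₀.le⟩
    exact ((key_ne z).mp hzZ) hzs
  unfold IsPreconnected at hZdisc
  push_neg at hZdisc
  obtain ⟨u, v, hu, hv, hsub, hne1, hne2, hdisj⟩ := hZdisc
  set U' : Set Y := u ∩ {x₀}ᶜ with hU'
  set V' : Set Y := v ∩ {x₀}ᶜ with hV'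
  have hU'open : IsOpen U' := hu.inter isOpen_compl_singleton
  have hV'open : IsOpen V' := hv.inter isOpen_compl_singleton
  have hUV : U' ∪ V' = ({x₀}ᶜ : Set Y) := by
    apply subset_antisymm
    · exact union_subset inter_subset_right inter_subset_right
    · intro z hz
      rcases hsub hz with h | h
      · exact Or.inl ⟨h, hz⟩
      · exact Or.inr ⟨h, hz⟩
  have hdisj' : U' ∩ V' = ∅ := by
    rw [eq_empty_iff_forall_notMem]
    rintro z ⟨⟨hzu, hzZ⟩, ⟨hzv, -⟩⟩
    have : z ∈ ({x₀}ᶜ : Set Y) ∩ (u ∩ v) := ⟨hzZ, hzu, hzv⟩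
    rw [hdisj] at this; exact this
  have hP1 := darboux_aux_union_singleton_preconnected hU'open hV'open hdisj' hUV
  have hP2 := darboux_aux_union_singleton_preconnected hV'open hU'open
    (by rw [inter_comm]; exact hdisj') (by rw [union_comm]; exact hUV)
  have h1 := hdar _ hP1
  have h2 := hdar _ hP2
  have hs1 : s ∈ g '' (U' ∪ {x₀}) := ⟨x₀, Or.inr rfl, hgx₀⟩
  have hs2 : s ∈ g '' (V' ∪ {x₀}) := ⟨x₀, Or.inr rfl, hgx₀⟩
  have hinter : ∀ t, t ∈ g '' (U' ∪ {x₀}) → t ∈ g '' (V' ∪ {x₀}) → t = s := by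
    rintro t ⟨a, ha, rfl⟩ ⟨b, hb, hgb⟩
    have hab : b = a := hinj hgb
    subst hab
    rcases ha with ha | ha
    · rcases hb with hb | hb
      · exfalso
        have : b ∈ U' ∩ V' := ⟨ha, hb⟩
        rw [hdisj'] at this; exact this
      · rw [mem_singleton_iff] at hb; rw [hb, hgx₀]
    · rw [mem_singleton_iff] at ha; rw [ha, hgx₀]
  have side : ∀ I J : Set ℝ, I.OrdConnected → J.OrdConnected → s ∈ I → s ∈ J →
      (∀ t, t ∈ I → t ∈ J → t = s) → (∃ t ∈ J, t ≠ s) →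
      (∀ a ∈ I, a ≤ s) ∨ (∀ a ∈ I, s ≤ a) := by
    intro I J hI hJ hsI hsJ hij ⟨t, htJ, hts⟩
    by_contra h
    push_neg at h
    obtain ⟨⟨b, hbI, hsb⟩, ⟨a, haI, has⟩⟩ := h
    rcases lt_or_gt_of_ne hts with htlt | htgt
    · obtain ⟨t', ht1, ht2⟩ : ∃ t', max a t < t' ∧ t' < s :=
        ⟨(s + max a t) / 2, by have := max_lt has htlt; constructor <;> linarith⟩
      have ht'I : t' ∈ I := hI.out haI hbI
        ⟨le_of_lt (lt_of_le_of_lt (le_max_left a t) ht1), by linarith⟩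
      have ht'J : t' ∈ J := hJ.out htJ hsJ
        ⟨le_of_lt (lt_of_le_of_lt (le_max_right a t) ht1), ht2.le⟩
      have := hij t' ht'I ht'J
      linarith
    · obtain ⟨t', ht1, ht2⟩ : ∃ t', s < t' ∧ t' < min b t :=
        ⟨(s + min b t) / 2, by have := lt_min hsb htgt; constructor <;> linarith⟩
      have ht'I : t' ∈ I := hI.out haI hbI
        ⟨by linarith, le_of_lt (lt_of_lt_of_le ht2 (min_le_left b t))⟩
      have ht'J : t' ∈ J := hJ.out hsJ htJ
        ⟨ht1.le, le_of_lt (lt_of_lt_of_le ht2 (min_le_right b t))⟩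
      have := hij t' ht'I ht'J
      linarith
  obtain ⟨w1, hw1Z, hw1u⟩ := hne1
  obtain ⟨w2, hw2Z, hw2v⟩ := hne2
  have hw1 : g w1 ∈ g '' (U' ∪ {x₀}) := ⟨w1, Or.inl ⟨hw1u, hw1Z⟩, rfl⟩
  have hw1ne : g w1 ≠ s := (key_ne w1).mp hw1Z
  have hw2 : g w2 ∈ g '' (V' ∪ {x₀}) := ⟨w2, Or.inl ⟨hw2v, hw2Z⟩, rfl⟩
  have hw2ne : g w2 ≠ s := (key_ne w2).mp hw2Z
  have hfin : ∀ A B : Set Y, IsOpen A → A ∪ B = ({x₀}ᶜ : Set Y) →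
      (∀ a ∈ g '' (A ∪ {x₀}), a ≤ s) → (∀ b ∈ g '' (B ∪ {x₀}), s ≤ b) →
      IsOpen {y | g y < s} := by
    intro A B hA hAB hAle hBge
    have : {y | g y < s} = A := by
      ext y
      simp only [mem_setOf_eq]
      constructor
      · intro hy
        have hyZ : y ∈ ({x₀}ᶜ : Set Y) := (key_ne y).mpr (ne_of_lt hy)
        rcases (hAB ▸ hyZ : y ∈ A ∪ B) with h | h
        · exact h
        · exact absurd (hBge (g y) ⟨y, Or.inl h, rfl⟩) (not_le.mpr hy)
      · intro hy
        have hyZ : y ∈ ({x₀}ᶜ : Set Y) := hAB ▸ Or.inl hy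
        exact lt_of_le_of_ne (hAle (g y) ⟨y, Or.inl hy, rfl⟩) ((key_ne y).mp hyZ)
    rw [this]; exact hA
  rcases side _ _ h1.ordConnected h2.ordConnected hs1 hs2 hinter ⟨g w2, hw2, hw2ne⟩ with
    hI1le | hI1ge
  · rcases side _ _ h2.ordConnected h1.ordConnected hs2 hs1
        (fun t a b => hinter t b a) ⟨g w1, hw1, hw1ne⟩ with hI2le | hI2ge
    · exfalso
      have hf₀Z : f₀ ∈ ({x₀}ᶜ : Set Y) := (key_ne f₀).mpr (ne_of_gt hf₀)
      rcases (hUV ▸ hf₀Z : f₀ ∈ U' ∪ V') with h | h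
      · exact absurd (hI1le (g f₀) ⟨f₀, Or.inl h, rfl⟩) (not_le.mpr hf₀)
      · exact absurd (hI2le (g f₀) ⟨f₀, Or.inl h, rfl⟩) (not_le.mpr hf₀)
    · exact hfin U' V' hU'open hUV hI1le hI2ge
  · rcases side _ _ h2.ordConnected h1.ordConnected hs2 hs1
        (fun t a b => hinter t b a) ⟨g w1, hw1, hw1ne⟩ with hI2le | hI2ge
    · exact hfin V' U' hV'open (by rw [union_comm]; exact hUV) hI2le hI1ge
    · exfalso
      have he₀Z : e₀ ∈ ({x₀}ᶜ : Set Y) := (key_ne e₀).mpr (ne_of_lt he₀)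
      rcases (hUV ▸ he₀Z : e₀ ∈ U' ∪ V') with h | h
      · exact absurd (hI1ge (g e₀) ⟨e₀, Or.inl h, rfl⟩) (not_le.mpr he₀)
      · exact absurd (hI2ge (g e₀) ⟨e₀, Or.inl h, rfl⟩) (not_le.mpr he₀)

lemma darboux_continuous_real {Y : Type*} [TopologicalSpace Y] [PreconnectedSpace Y] [T1Space Y]
    {g : Y → ℝ} (hinj : Function.Injective g)
    (hdar : ∀ C : Set Y, IsPreconnected C → IsPreconnected (g '' C)) : Continuous g := by
  have hlt : ∀ s, IsOpen {y | g y < s} := darboux_isOpen_lt hinj hdar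
  have hgt : ∀ s, IsOpen {y | s < g y} := by
    intro s
    have hinj' : Function.Injective (fun y => -(g y)) := fun a b h => hinj (neg_injective h)
    have hdar' : ∀ C : Set Y, IsPreconnected C → IsPreconnected ((fun y => -(g y)) '' C) := by
      intro C hC
      have himg : (fun y => -(g y)) '' C = Neg.neg '' (g '' C) := by
        rw [image_image]
      rw [himg]
      exact (hdar C hC).image _ continuous_neg.continuousOn
    have h := darboux_isOpen_lt hinj' hdar' (-s)
    have heq : {y | (fun y => -(g y)) y < -s} = {y | s < g y} := by
      ext y; simp only [mem_setOf_eq, neg_lt_neg_iff]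
    rwa [heq] at h
  rw [continuous_def]
  intro O hO
  rw [isOpen_iff_forall_mem_open]
  intro y hy
  obtain ⟨l, u, hlu, hsub⟩ := mem_nhds_iff_exists_Ioo_subset.mp (hO.mem_nhds hy)
  exact ⟨{z | l < g z} ∩ {z | g z < u},
    fun z hz => hsub ⟨hz.1, hz.2⟩, (hgt l).inter (hlt u), hlu.1, hlu.2⟩

noncomputable abbrev darbouxL : ℂ ≃ₗᵢ[ℝ] EuclideanSpace ℝ (Fin 2) :=
  Complex.orthonormalBasisOneI.repr

lemma darboux_exists_real_embed {Y : Type*} [TopologicalSpace Y] [PreconnectedSpace Y]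
    [T1Space Y] (f : Y → (Metric.sphere (0 : EuclideanSpace ℝ (Fin 2)) 1))
    (hinj : Function.Injective f)
    (hdar : ∀ C : Set Y, IsPreconnected C → IsPreconnected (f '' C))
    {p : Metric.sphere (0 : EuclideanSpace ℝ (Fin 2)) 1} (hp : p ∉ Set.range f) :
    ∃ g : Y → ℝ, Continuous g ∧ Function.Injective g ∧
      ∀ y, ((f y : EuclideanSpace ℝ (Fin 2)) =
        darbouxL (-(Complex.exp ((g y : ℂ) * Complex.I)) *
          (darbouxL.symm (p : EuclideanSpace ℝ (Fin 2))))) := by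
  set L := darbouxL with hL
  set F : Y → ℂ := fun y => L.symm (f y : EuclideanSpace ℝ (Fin 2)) with hF
  set P : ℂ := L.symm (p : EuclideanSpace ℝ (Fin 2)) with hP
  have habs : ∀ y, ‖F y‖ = 1 := by
    intro y
    rw [hF]
    rw [L.symm.norm_map]
    exact mem_sphere_zero_iff_norm.mp (f y).2
  have habsP : ‖P‖ = 1 := by
    rw [hP, L.symm.norm_map]
    exact mem_sphere_zero_iff_norm.mp p.2
  have hPconj : (starRingEnd ℂ) P * P = 1 := by
    have h1 : Complex.normSq P = 1 := by
      rw [Complex.normSq_eq_norm_sq, habsP]; norm_num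
    rw [mul_comm, Complex.mul_conj, h1, Complex.ofReal_one]
  have hPne : (starRingEnd ℂ) P ≠ 0 := by
    intro h
    rw [h, zero_mul] at hPconj
    exact zero_ne_one hPconj
  have hFP : ∀ y, F y ≠ P := by
    intro y h
    refine hp ⟨y, ?_⟩
    apply Subtype.ext
    have := congrArg L h
    simpa [hF, hP, L.apply_symm_apply] using this
  have hmne : ∀ y, -(F y * (starRingEnd ℂ) P) ≠ -1 := by
    intro y h
    have h1 : F y * (starRingEnd ℂ) P = 1 := by
      have := congrArg Neg.neg h; simpa using this
    refine hFP y ?_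
    calc F y = F y * ((starRingEnd ℂ) P * P) := by rw [hPconj, mul_one]
    _ = (F y * (starRingEnd ℂ) P) * P := by ring
    _ = P := by rw [h1, one_mul]
  have habsm : ∀ y, ‖-(F y * (starRingEnd ℂ) P)‖ = 1 := by
    intro y
    rw [norm_neg, norm_mul, Complex.norm_conj, habs y, habsP, mul_one]
  set g : Y → ℝ := fun y => (-(F y * (starRingEnd ℂ) P)).arg with hg
  have hFeq : ∀ y, F y = -(Complex.exp ((g y : ℂ) * Complex.I)) * P := by
    intro y
    have h1 : (‖-(F y * (starRingEnd ℂ) P)‖ : ℂ) *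
        Complex.exp ((g y : ℂ) * Complex.I) = -(F y * (starRingEnd ℂ) P) :=
      Complex.norm_mul_exp_arg_mul_I _
    rw [habsm y] at h1
    rw [Complex.ofReal_one, one_mul] at h1
    calc F y = F y * ((starRingEnd ℂ) P * P) := by rw [hPconj, mul_one]
    _ = (F y * (starRingEnd ℂ) P) * P := by ring
    _ = -(Complex.exp ((g y : ℂ) * Complex.I)) * P := by
        rw [h1]; ring
  have hginj : Function.Injective g := by
    intro a b hab
    have h1 : -(F a * (starRingEnd ℂ) P) = -(F b * (starRingEnd ℂ) P) :=
      Complex.ext_norm_arg (by rw [habsm a, habsm b]) hab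
    have h2 : F a = F b := mul_right_cancel₀ hPne (neg_injective h1)
    have h3 : (f a : EuclideanSpace ℝ (Fin 2)) = (f b : EuclideanSpace ℝ (Fin 2)) := by
      have := congrArg L h2
      simpa [hF, L.apply_symm_apply] using this
    exact hinj (Subtype.ext h3)
  have hgdar : ∀ C : Set Y, IsPreconnected C → IsPreconnected (g '' C) := by
    intro C hC
    have hcont : Continuous (fun w : Metric.sphere (0 : EuclideanSpace ℝ (Fin 2)) 1 =>
        -(L.symm (w : EuclideanSpace ℝ (Fin 2)) * (starRingEnd ℂ) P)) :=
      ((L.symm.continuous.comp continuous_subtype_val).mul continuous_const).neg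
    have h1 : IsPreconnected ((fun w : Metric.sphere (0 : EuclideanSpace ℝ (Fin 2)) 1 =>
        -(L.symm (w : EuclideanSpace ℝ (Fin 2)) * (starRingEnd ℂ) P)) '' (f '' C)) :=
      (hdar C hC).image _ hcont.continuousOn
    have himg : g '' C = Complex.arg '' ((fun w : Metric.sphere (0 : EuclideanSpace ℝ (Fin 2)) 1 =>
        -(L.symm (w : EuclideanSpace ℝ (Fin 2)) * (starRingEnd ℂ) P)) '' (f '' C)) := by
      rw [image_image, image_image]
    rw [himg]
    refine h1.image _ (fun z hz => (Complex.continuousAt_arg ?_).continuousWithinAt)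
    obtain ⟨w, ⟨y, -, rfl⟩, rfl⟩ := hz
    rw [Complex.mem_slitPlane_iff]
    by_contra hcon
    push_neg at hcon
    obtain ⟨hre, him⟩ := hcon
    set z : ℂ := -(L.symm ((f y : EuclideanSpace ℝ (Fin 2))) * (starRingEnd ℂ) P) with hz
    have hzabs : ‖z‖ = 1 := habsm y
    have hzne : z ≠ -1 := hmne y
    have hzre : z = (z.re : ℂ) := Complex.ext rfl (by simpa using him)
    have : |z.re| = 1 := by rw [hzre, Complex.norm_real, Real.norm_eq_abs] at hzabs; exact hzabs
    rcases abs_eq (by norm_num : (0:ℝ) ≤ 1) |>.mp this with h | h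
    · rw [h] at hre; norm_num at hre
    · apply hzne
      rw [hzre, h]; norm_num
  exact ⟨g, darboux_continuous_real hginj hgdar, hginj, fun y => by
    have := hFeq y
    have h2 := congrArg L this
    rw [hF] at h2
    rw [L.apply_symm_apply] at h2
    exact h2⟩

lemma darboux_nonsurj_continuous {Y : Type*} [TopologicalSpace Y] [PreconnectedSpace Y]
    [T1Space Y] (f : Y → (Metric.sphere (0 : EuclideanSpace ℝ (Fin 2)) 1))
    (hinj : Function.Injective f)
    (hdar : ∀ C : Set Y, IsPreconnected C → IsPreconnected (f '' C))
    {p : Metric.sphere (0 : EuclideanSpace ℝ (Fin 2)) 1} (hp : p ∉ Set.range f) :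
    Continuous f := by
  obtain ⟨g, hg, -, hform⟩ := darboux_exists_real_embed f hinj hdar hp
  have hcont : Continuous (fun y => ((f y : EuclideanSpace ℝ (Fin 2)))) := by
    have heq : (fun y => ((f y : EuclideanSpace ℝ (Fin 2)))) =
        fun y => darbouxL (-(Complex.exp ((g y : ℂ) * Complex.I)) *
          (darbouxL.symm (p : EuclideanSpace ℝ (Fin 2)))) := funext hform
    rw [heq]
    exact darbouxL.continuous.comp
      (((Complex.continuous_exp.comp ((Complex.continuous_ofReal.comp hg).mul
        continuous_const)).neg).mul continuous_const)
  exact Continuous.subtype_mk hcont (fun y => (f y).2)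

/-- A Darboux injection from a connected T1 space into a subspace `S` admitting a
point outside a set's image is continuous on suitable subsets.  Main continuity. -/
theorem darboux_sphere_continuous {X : Type*} [TopologicalSpace X] [PreconnectedSpace X]
    [T1Space X] (f : X → (Metric.sphere (0 : EuclideanSpace ℝ (Fin 2)) 1))
    (hinj : Function.Injective f)
    (hdar : ∀ C : Set X, IsPreconnected C → IsPreconnected (f '' C)) :
    Continuous f := by
  -- generic: ContinuousOn from a preconnected subset missing a point of the image
  have base : ∀ (A : Set X), IsPreconnected A →
      (∃ q, q ∉ f '' A) → ContinuousOn f A := by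
    intro A hA ⟨q, hq⟩
    have : PreconnectedSpace A := Subtype.preconnectedSpace hA
    rw [continuousOn_iff_continuous_restrict]
    refine darboux_nonsurj_continuous _ ?_ ?_ (p := q) ?_
    · exact fun a b h => Subtype.ext (hinj h)
    · intro C hC
      have himg : (A.restrict f) '' C = f '' ((↑) '' C) := by
        rw [image_image]; rfl
      change IsPreconnected ((A.restrict f) '' C)
      rw [himg]
      exact hdar _ (hC.image _ continuous_subtype_val.continuousOn)
    · rintro ⟨⟨y, hy⟩, hfy⟩
      exact hq ⟨y, hy, hfy⟩
  rcases subsingleton_or_nontrivial X with hX | hX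
  · refine continuous_def.mpr fun O hO => ?_
    rcases eq_empty_or_nonempty (f ⁻¹' O) with h | ⟨a, ha⟩
    · rw [h]; exact isOpen_empty
    · have : f ⁻¹' O = univ := eq_univ_of_forall fun b => (Subsingleton.elim a b) ▸ ha
      rw [this]; exact isOpen_univ
  obtain ⟨x₁, x₂, hx12⟩ := exists_pair_ne X
  have key : ∀ x : X, ContinuousOn f {x}ᶜ ∨ Continuous f := by
    intro x
    by_cases hZ : IsPreconnected ({x}ᶜ : Set X)
    · left
      refine base _ hZ ⟨f x, ?_⟩
      rintro ⟨y, hy, hfy⟩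
      exact hy (show y ∈ ({x} : Set X) from hinj hfy)
    · right
      unfold IsPreconnected at hZ
      push_neg at hZ
      obtain ⟨u, v, hu, hv, hsub, hne1, hne2, hdisj⟩ := hZ
      set U' : Set X := u ∩ {x}ᶜ with hU'
      set V' : Set X := v ∩ {x}ᶜ with hV'
      have hU'open : IsOpen U' := hu.inter isOpen_compl_singleton
      have hV'open : IsOpen V' := hv.inter isOpen_compl_singleton
      have hUV : U' ∪ V' = ({x}ᶜ : Set X) := by
        apply subset_antisymm
        · exact union_subset inter_subset_right inter_subset_right
        · intro z hz
          rcases hsub hz with h | h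
          · exact Or.inl ⟨h, hz⟩
          · exact Or.inr ⟨h, hz⟩
      have hdisj' : U' ∩ V' = ∅ := by
        rw [eq_empty_iff_forall_notMem]
        rintro z ⟨⟨hzu, hzZ⟩, ⟨hzv, -⟩⟩
        have : z ∈ ({x}ᶜ : Set X) ∩ (u ∩ v) := ⟨hzZ, hzu, hzv⟩
        rw [hdisj] at this; exact this
      have hP1 := darboux_aux_union_singleton_preconnected hU'open hV'open hdisj' hUV
      have hP2 := darboux_aux_union_singleton_preconnected hV'open hU'open
        (by rw [inter_comm]; exact hdisj') (by rw [union_comm]; exact hUV)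
      obtain ⟨w1, hw1Z, hw1u⟩ := hne1
      obtain ⟨w2, hw2Z, hw2v⟩ := hne2
      have hw1U' : w1 ∈ U' := ⟨hw1u, hw1Z⟩
      have hw2V' : w2 ∈ V' := ⟨hw2v, hw2Z⟩
      -- continuity on the two closed pieces
      have hc1 : ContinuousOn f (U' ∪ {x}) := by
        refine base _ hP1 ⟨f w2, ?_⟩
        rintro ⟨y, hy, hfy⟩
        have hyw : y = w2 := hinj hfy
        subst hyw
        rcases hy with hy | hy
        · have : y ∈ U' ∩ V' := ⟨hy, hw2V'⟩
          rw [hdisj'] at this; exact this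
        · rw [mem_singleton_iff] at hy
          exact hw2Z (show y ∈ ({x} : Set X) from hy)
      have hc2 : ContinuousOn f (V' ∪ {x}) := by
        refine base _ hP2 ⟨f w1, ?_⟩
        rintro ⟨y, hy, hfy⟩
        have hyw : y = w1 := hinj hfy
        subst hyw
        rcases hy with hy | hy
        · have : y ∈ U' ∩ V' := ⟨hw1U', hy⟩
          rw [hdisj'] at this; exact this
        · rw [mem_singleton_iff] at hy
          exact hw1Z (show y ∈ ({x} : Set X) from hy)
      have hclosed1 : IsClosed (U' ∪ {x}) := by
        have : U' ∪ {x} = V'ᶜ := by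
          apply subset_antisymm
          · rintro z (hz | hz)
            · intro hzV
              have : z ∈ U' ∩ V' := ⟨hz, hzV⟩
              rw [hdisj'] at this; exact this
            · rw [mem_singleton_iff] at hz
              subst hz
              intro hzV
              exact hzV.2 rfl
          · intro z hz
            by_cases hzx : z = x
            · exact Or.inr (by simp [hzx])
            · have : z ∈ U' ∪ V' := hUV ▸ hzx
              rcases this with h | h
              · exact Or.inl h
              · exact absurd h hz
        rw [this]
        exact hV'open.isClosed_compl
      have hclosed2 : IsClosed (V' ∪ {x}) := by
        have : V' ∪ {x} = U'ᶜ := by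
          apply subset_antisymm
          · rintro z (hz | hz)
            · intro hzU
              have : z ∈ U' ∩ V' := ⟨hzU, hz⟩
              rw [hdisj'] at this; exact this
            · rw [mem_singleton_iff] at hz
              subst hz
              intro hzU
              exact hzU.2 rfl
          · intro z hz
            by_cases hzx : z = x
            · exact Or.inr (by simp [hzx])
            · have : z ∈ U' ∪ V' := hUV ▸ hzx
              rcases this with h | h
              · exact absurd h hz
              · exact Or.inl h
        rw [this]
        exact hU'open.isClosed_compl
      have hcoverX : (U' ∪ {x}) ∪ (V' ∪ {x}) = univ := by
        apply eq_univ_of_forall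
        intro z
        by_cases hzx : z = x
        · exact Or.inl (Or.inr (by simp [hzx]))
        · have : z ∈ U' ∪ V' := hUV ▸ hzx
          rcases this with h | h
          · exact Or.inl (Or.inl h)
          · exact Or.inr (Or.inl h)
      rw [continuous_iff_isClosed]
      intro K hK
      have : f ⁻¹' K = ((U' ∪ {x}) ∩ f ⁻¹' K) ∪ ((V' ∪ {x}) ∩ f ⁻¹' K) := by
        rw [← union_inter_distrib_right, hcoverX, univ_inter]
      rw [this]
      exact (hc1.preimage_isClosed_of_isClosed hclosed1 hK).union
        (hc2.preimage_isClosed_of_isClosed hclosed2 hK)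
  rcases key x₁ with h1 | h1
  · rcases key x₂ with h2 | h2
    · rw [continuous_iff_continuousAt]
      intro z
      rcases ne_or_eq z x₁ with hz | rfl
      · exact h1.continuousAt (isOpen_compl_singleton.mem_nhds (by simpa))
      · exact h2.continuousAt (isOpen_compl_singleton.mem_nhds (by simpa using hx12))
    · exact h2
  · exact h1


/-- For a continuous injection from a compact space, preimages of suitable closed sets
whose intersection with the range is preconnected are preconnected. -/
lemma darboux_preimage_preconnected {X : Type*} [TopologicalSpace X] [CompactSpace X]
    [T2Space X] {α : Type*} [TopologicalSpace α] [T2Space α] {f : X → α}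
    (hf : Continuous f) (hinj : Function.Injective f) {A : Set α} (hAc : IsClosed A)
    (hA : IsPreconnected (A ∩ range f)) : IsPreconnected (f ⁻¹' A) := by
  intro u v hu hv hsub hne1 hne2
  by_contra hemp
  rw [not_nonempty_iff_eq_empty] at hemp
  set V := f ⁻¹' A with hV
  have hVc : IsClosed V := hAc.preimage hf
  set K₁ : Set X := V \ v with hK₁
  set K₂ : Set X := V \ u with hK₂
  have hK₁c : IsClosed K₁ := hVc.inter hv.isClosed_compl
  have hK₂c : IsClosed K₂ := hVc.inter hu.isClosed_compl
  have himg1 : IsClosed (f '' K₁) := (hK₁c.isCompact.image hf).isClosed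
  have himg2 : IsClosed (f '' K₂) := (hK₂c.isCompact.image hf).isClosed
  have hcover : A ∩ range f ⊆ f '' K₁ ∪ f '' K₂ := by
    rintro z ⟨hzA, y, rfl⟩
    have hyV : y ∈ V := hzA
    rcases hsub hyV with h | h
    · refine Or.inl ⟨y, ⟨hyV, ?_⟩, rfl⟩
      intro hyv
      have : y ∈ V ∩ (u ∩ v) := ⟨hyV, h, hyv⟩
      rw [hemp] at this; exact this
    · refine Or.inr ⟨y, ⟨hyV, ?_⟩, rfl⟩
      intro hyu
      have : y ∈ V ∩ (u ∩ v) := ⟨hyV, hyu, h⟩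
      rw [hemp] at this; exact this
  have hdisjimg : Disjoint (f '' K₁) (f '' K₂) := by
    rw [Set.disjoint_left]
    rintro z ⟨a, ha, rfl⟩ ⟨b, hb, hba⟩
    have hab : b = a := hinj hba
    subst hab
    rcases hsub ha.1 with h | h
    · exact hb.2 h
    · exact ha.2 h
  have hARclosed : IsClosed (A ∩ range f) :=
    hAc.inter (isCompact_range hf).isClosed
  rcases (isPreconnected_iff_subset_of_fully_disjoint_closed hARclosed).mp hA
      _ _ himg1 himg2 hcover hdisjimg with hsub1 | hsub2
  · obtain ⟨b, hbV, hbv⟩ := hne2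
    obtain ⟨a, ha, hab⟩ := hsub1 ⟨hbV, mem_range_self b⟩
    have : a = b := hinj hab
    subst this
    exact ha.2 hbv
  · obtain ⟨a, haV, hau⟩ := hne1
    obtain ⟨b, hb, hba⟩ := hsub2 ⟨haV, mem_range_self a⟩
    have : b = a := hinj hba
    subst this
    exact hb.2 hau

/-- If a connected compact Hausdorff space `X` admits a Darboux injection
`f : X → S¹` into the circle, then `X` is locally connected. -/
theorem locallyConnected_of_darboux_injection_to_circle {X : Type*} [TopologicalSpace X]
    [CompactSpace X] [ConnectedSpace X] [T2Space X]
    (f : X → (Metric.sphere (0 : EuclideanSpace ℝ (Fin 2)) 1))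
    (hinj : Function.Injective f)
    (hdarboux : ∀ C : Set X, IsPreconnected C → IsPreconnected (f '' C)) :
    LocallyConnectedSpace X := by
  have hf : Continuous f := darboux_sphere_continuous f hinj hdarboux
  rw [locallyConnectedSpace_iff_connected_subsets]
  intro x U hU
  obtain ⟨O, hOU, hOopen, hxO⟩ := mem_nhds_iff.mp hU
  by_cases hsurj : Function.Surjective f
  · -- surjective case : use closed arcs around f x
    set L := darbouxL with hLdef
    set ζ : ℂ := L.symm ((f x : EuclideanSpace ℝ (Fin 2))) with hζ
    have habsζ : ‖ζ‖ = 1 := by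
      rw [hζ, L.symm.norm_map]
      exact mem_sphere_zero_iff_norm.mp (f x).2
    have hζconj : ζ * (starRingEnd ℂ) ζ = 1 := by
      rw [Complex.mul_conj]
      rw [Complex.normSq_eq_norm_sq, habsζ]; norm_num
    have hmem : ∀ θ : ℝ, L (Complex.exp ((θ : ℂ) * Complex.I) * ζ) ∈
        Metric.sphere (0 : EuclideanSpace ℝ (Fin 2)) 1 := by
      intro θ
      rw [mem_sphere_zero_iff_norm, L.norm_map, norm_mul,
        Complex.norm_exp_ofReal_mul_I, habsζ, one_mul]
    set Φ : ℝ → (Metric.sphere (0 : EuclideanSpace ℝ (Fin 2)) 1) :=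
      fun θ => ⟨L (Complex.exp ((θ : ℂ) * Complex.I) * ζ), hmem θ⟩ with hΦ
    have hΦcont : Continuous Φ := by
      refine Continuous.subtype_mk ?_ _
      exact L.continuous.comp ((Complex.continuous_exp.comp
        ((Complex.continuous_ofReal.mul continuous_const))).mul continuous_const)
    have hΦ0 : Φ 0 = f x := by
      apply Subtype.ext
      simp only [hΦ]
      rw [Complex.ofReal_zero, zero_mul, Complex.exp_zero, one_mul, hζ,
        L.apply_symm_apply]
    -- the image of the complement is compact and misses f x
    have hCcomp : IsCompact (f '' Oᶜ) := (hOopen.isClosed_compl.isCompact).image hf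
    have hCclosed : IsClosed (f '' Oᶜ) := hCcomp.isClosed
    have hfxC : f x ∉ f '' Oᶜ := by
      rintro ⟨y, hy, hfy⟩
      exact hy (hinj hfy ▸ hxO)
    have hWopen : IsOpen ((f '' Oᶜ)ᶜ) := hCclosed.isOpen_compl
    have hΦW : IsOpen (Φ ⁻¹' (f '' Oᶜ)ᶜ) := hWopen.preimage hΦcont
    have h0mem : (0 : ℝ) ∈ Φ ⁻¹' (f '' Oᶜ)ᶜ := by
      rw [mem_preimage, hΦ0]; exact hfxC
    obtain ⟨r, hr, hball⟩ := Metric.isOpen_iff.mp hΦW 0 h0mem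
    set ε : ℝ := r / 2 with hε
    have hεpos : 0 < ε := by positivity
    have hIccW : ∀ θ ∈ Icc (-ε) ε, Φ θ ∈ (f '' Oᶜ)ᶜ := by
      intro θ hθ
      apply hball
      rw [Metric.mem_ball, Real.dist_eq, sub_zero]
      have : |θ| ≤ ε := abs_le.mpr ⟨hθ.1, hθ.2⟩
      linarith
    set A : Set (Metric.sphere (0 : EuclideanSpace ℝ (Fin 2)) 1) := Φ '' (Icc (-ε) ε)
      with hA
    have hApre : IsPreconnected A := isPreconnected_Icc.image _ hΦcont.continuousOn
    have hAclosed : IsClosed A := (isCompact_Icc.image hΦcont).isClosed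
    set V : Set X := f ⁻¹' A with hVdef
    have hVO : V ⊆ O := by
      intro y hy
      by_contra hyO
      obtain ⟨θ, hθ, hΦθ⟩ := hy
      have h1 : Φ θ ∈ (f '' Oᶜ)ᶜ := hIccW θ hθ
      exact h1 (hΦθ ▸ ⟨y, hyO, rfl⟩)
    have hVpre : IsPreconnected V := by
      refine darboux_preimage_preconnected hf hinj hAclosed ?_
      rw [Set.range_eq_univ.mpr hsurj, inter_univ]
      exact hApre
    have hVnhds : V ∈ nhds x := by
      have harg : ContinuousAt Complex.arg 1 :=
        Complex.continuousAt_arg (by simp [Complex.mem_slitPlane_iff])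
      obtain ⟨δ, hδ, hδprop⟩ := Metric.continuousAt_iff.mp harg ε hεpos
      refine mem_nhds_iff.mpr ⟨f ⁻¹' (Metric.ball (f x) δ), ?_,
        Metric.isOpen_ball.preimage hf, by simp [Metric.mem_ball, hδ]⟩
      intro y hy
      rw [mem_preimage, Metric.mem_ball] at hy
      set w : ℂ := L.symm ((f y : EuclideanSpace ℝ (Fin 2))) with hw
      have habsw : ‖w * (starRingEnd ℂ) ζ‖ = 1 := by
        rw [norm_mul, Complex.norm_conj, habsζ, mul_one, hw,
          L.symm.norm_map]
        exact mem_sphere_zero_iff_norm.mp (f y).2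
      have hdist : dist (w * (starRingEnd ℂ) ζ) 1 < δ := by
        rw [Complex.dist_eq]
        have heq1 : w * (starRingEnd ℂ) ζ - 1 = (w - ζ) * (starRingEnd ℂ) ζ := by
          rw [sub_mul, hζconj]
        rw [heq1, norm_mul, Complex.norm_conj, habsζ, mul_one]
        have heq2 : ‖w - ζ‖ = dist (f y) (f x) := by
          rw [Subtype.dist_eq, dist_eq_norm, hw, hζ, ← map_sub,
            L.symm.norm_map]
        rw [heq2]
        exact hy
      have hθlt : |(w * (starRingEnd ℂ) ζ).arg| < ε := by
        have := hδprop hdist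
        rwa [Complex.arg_one, Real.dist_eq, sub_zero] at this
      refine ⟨(w * (starRingEnd ℂ) ζ).arg, abs_le.mp hθlt.le, ?_⟩
      apply Subtype.ext
      simp only [hΦ]
      have hexp : Complex.exp (((w * (starRingEnd ℂ) ζ).arg : ℂ) * Complex.I) =
          w * (starRingEnd ℂ) ζ := by
        have h1 := Complex.norm_mul_exp_arg_mul_I (w * (starRingEnd ℂ) ζ)
        rw [habsw, Complex.ofReal_one, one_mul] at h1
        exact h1
      rw [hexp]
      have : w * (starRingEnd ℂ) ζ * ζ = w := by
        rw [mul_assoc, mul_comm ((starRingEnd ℂ) ζ) ζ, hζconj, mul_one]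
      rw [this, hw, L.apply_symm_apply]
    exact ⟨V, hVnhds, hVpre, hVO.trans hOU⟩
  · -- non-surjective case : transfer to ℝ
    obtain ⟨p, hp⟩ : ∃ p, p ∉ Set.range f := by
      by_contra h
      push_neg at h
      exact hsurj fun b => h b
    obtain ⟨g, hg, hginj, -⟩ := darboux_exists_real_embed f hinj hdarboux hp
    have hCcomp : IsCompact (g '' Oᶜ) := (hOopen.isClosed_compl.isCompact).image hg
    have hCclosed : IsClosed (g '' Oᶜ) := hCcomp.isClosed
    have hgxC : g x ∉ g '' Oᶜ := by
      rintro ⟨y, hy, hgy⟩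
      exact hy (hginj hgy ▸ hxO)
    obtain ⟨r, hr, hball⟩ := Metric.isOpen_iff.mp hCclosed.isOpen_compl (g x) hgxC
    set ε : ℝ := r / 2 with hε
    have hεpos : 0 < ε := by positivity
    set V : Set X := g ⁻¹' (Icc (g x - ε) (g x + ε)) with hVdef
    have hVO : V ⊆ O := by
      intro y hy
      by_contra hyO
      have h1 : g y ∈ g '' Oᶜ := ⟨y, hyO, rfl⟩
      have h2 : g y ∈ Metric.ball (g x) r := by
        rw [Metric.mem_ball, Real.dist_eq, abs_lt]
        rw [hVdef, mem_preimage, mem_Icc] at hy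
        constructor <;> linarith [hy.1, hy.2]
      exact (hball h2) h1
    have hVpre : IsPreconnected V := by
      refine darboux_preimage_preconnected hg hginj isClosed_Icc ?_
      exact (Set.ordConnected_Icc.inter (isPreconnected_range hg).ordConnected).isPreconnected
    have hVnhds : V ∈ nhds x := by
      refine mem_nhds_iff.mpr ⟨g ⁻¹' (Ioo (g x - ε) (g x + ε)), ?_,
        isOpen_Ioo.preimage hg, by simp [hεpos]⟩
      intro y hy
      rw [mem_preimage, mem_Ioo] at hy
      exact ⟨hy.1.le, hy.2.le⟩
    exact ⟨V, hVnhds, hVpre, hVO.trans hOU⟩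
end

section
/- Every Darboux injection f : X → S¹ from a nonempty connected compact metrizable space X to the circle S¹ is a topological embedding, i.e., a homeomorphism of X onto its image with the subspace topology. -/
open Set Topology Metric

lemma aux_mem_closure_of_preconnected_union {α : Type*} [TopologicalSpace α] [T1Space α]
    {T : Set α} {q : α} (hT : IsPreconnected (T ∪ {q})) (hq : q ∉ T) (hne : T.Nonempty) :
    q ∈ closure T := by
  by_contra h
  obtain ⟨z, hzmem, hzu, hzv⟩ := hT (closure T)ᶜ {q}ᶜ isClosed_closure.isOpen_compl
    isClosed_singleton.isOpen_compl
    (by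
      intro t ht
      rcases ht with ht | ht
      · exact Or.inr (by simp only [mem_compl_iff, mem_singleton_iff]; rintro rfl; exact hq ht)
      · exact Or.inl (by rw [mem_singleton_iff] at ht; subst ht; exact h))
    ⟨q, Or.inr rfl, h⟩
    (hne.imp fun t ht => ⟨Or.inl ht, by simp only [mem_compl_iff, mem_singleton_iff]; rintro rfl; exact hq ht⟩)
  rcases hzmem with hz | hz
  · exact hzu (subset_closure hz)
  · exact hzv hz

lemma aux_closed_bump {α : Type*} [TopologicalSpace α] [CompactSpace α] [T2Space α]
    [PreconnectedSpace α] {E : Set α} (hE : IsClosed E) (hne : E ≠ univ) {x : α} (hx : x ∈ E) :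
    ∃ z ∈ connectedComponentIn E x, z ∉ interior E := by
  by_contra hcon
  push_neg at hcon
  haveI : CompactSpace E := isCompact_iff_compactSpace.mp hE.isCompact
  set x' : E := ⟨x, hx⟩ with hx'
  have himg : connectedComponentIn E x = Subtype.val '' connectedComponent x' :=
    connectedComponentIn_eq_image hx
  set O : Set E := Subtype.val ⁻¹' interior E with hOdef
  have hOopen : IsOpen O := isOpen_interior.preimage continuous_subtype_val
  have hsub : connectedComponent x' ⊆ O := by
    intro z hz
    exact hcon z (himg ▸ ⟨z, hz, rfl⟩)
  haveI : Nonempty {s : Set E // IsClopen s ∧ x' ∈ s} := ⟨⟨univ, isClopen_univ, mem_univ _⟩⟩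
  have hdisj : Oᶜ ∩ ⋂ s : {s : Set E // IsClopen s ∧ x' ∈ s}, (s : Set E) = ∅ := by
    rw [← connectedComponent_eq_iInter_isClopen x']
    rw [eq_empty_iff_forall_notMem]
    exact fun z hz => hz.1 (hsub hz.2)
  have hdir : Directed (· ⊇ ·) (fun s : {s : Set E // IsClopen s ∧ x' ∈ s} => (s : Set E)) := by
    intro s t
    exact ⟨⟨s.1 ∩ t.1, s.2.1.inter t.2.1, s.2.2, t.2.2⟩, inter_subset_left, inter_subset_right⟩
  obtain ⟨Z, hZ⟩ := (hOopen.isClosed_compl.isCompact).elim_directed_family_closed _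
    (fun s => s.2.1.isClosed) hdisj hdir
  have hZO : (Z : Set E) ⊆ O := by
    intro z hz
    by_contra h
    exact (eq_empty_iff_forall_notMem.mp hZ z) ⟨h, hz⟩
  set F : Set α := Subtype.val '' (Z : Set E) with hF
  have hFclosed : IsClosed F :=
    ((Z.2.1.isClosed.isCompact).image continuous_subtype_val).isClosed
  have hFint : F ⊆ interior E := by rintro _ ⟨z, hz, rfl⟩; exact hZO hz
  have hFopen : IsOpen F := by
    obtain ⟨O', hO'open, hO'⟩ := isOpen_induced_iff.mp Z.2.1.isOpen
    have : F = O' ∩ interior E := by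
      apply Subset.antisymm
      · intro z hz
        refine ⟨?_, hFint hz⟩
        obtain ⟨w, hw, rfl⟩ := hz
        have : w ∈ (Subtype.val ⁻¹' O' : Set E) := hO' ▸ hw
        exact this
      · rintro z ⟨hz1, hz2⟩
        exact ⟨⟨z, interior_subset hz2⟩, hO' ▸ (by exact hz1), rfl⟩
    rw [this]
    exact hO'open.inter isOpen_interior
  have : F = univ := (IsClopen.eq_univ ⟨hFclosed, hFopen⟩) ⟨x, ⟨x', Z.2.2, rfl⟩⟩
  exact hne (univ_subset_iff.mp (this ▸ (hFint.trans interior_subset)))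

lemma aux_open_bump {α : Type*} [TopologicalSpace α] [CompactSpace α] [T2Space α]
    [PreconnectedSpace α] {U : Set α} (hU : IsOpen U) (hne : U ≠ univ) {x : α} (hx : x ∈ U) :
    ∃ a ∈ Uᶜ, a ∈ closure (connectedComponentIn U x) := by
  by_contra hcon
  push_neg at hcon
  have hclU : closure (connectedComponentIn U x) ⊆ U := by
    intro z hz
    by_contra h
    exact hcon z h hz
  obtain ⟨V, hVopen, hCV, hVU⟩ := normal_exists_closure_subset isClosed_closure hU hclU
  set E : Set α := closure V with hE
  have hxE : x ∈ E := subset_closure (hCV (subset_closure (mem_connectedComponentIn hx)))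
  have hEne : E ≠ univ := fun h => hne (univ_subset_iff.mp (h ▸ hVU))
  obtain ⟨z, hzC, hzint⟩ := aux_closed_bump isClosed_closure hEne hxE
  have hsub : connectedComponentIn E x ⊆ connectedComponentIn U x :=
    (isPreconnected_connectedComponentIn).subset_connectedComponentIn
      (mem_connectedComponentIn hxE) ((connectedComponentIn_subset E x).trans hVU)
  have : z ∈ V := hCV (subset_closure (hsub hzC))
  exact hzint (interior_mono subset_closure (hVopen.subset_interior_iff.mpr Subset.rfl this))



lemma aux_pair_above {s t : Set ℝ} (hs : s.OrdConnected)
    (hsA : ¬BddAbove s) (htA : ¬BddAbove t) (hst : s ∩ t = ∅) : False := by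
  obtain ⟨a, ha, -⟩ := not_bddAbove_iff.mp hsA 0
  obtain ⟨b, hb, hab⟩ := not_bddAbove_iff.mp htA a
  obtain ⟨a', ha', hba'⟩ := not_bddAbove_iff.mp hsA b
  have : b ∈ s := hs.out ha ha' ⟨hab.le, hba'.le⟩
  exact (eq_empty_iff_forall_notMem.mp hst b) ⟨this, hb⟩

lemma aux_pair_below {s t : Set ℝ} (hs : s.OrdConnected)
    (hsA : ¬BddBelow s) (htA : ¬BddBelow t) (hst : s ∩ t = ∅) : False := by
  obtain ⟨a, ha, -⟩ := not_bddBelow_iff.mp hsA 0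
  obtain ⟨b, hb, hab⟩ := not_bddBelow_iff.mp htA a
  obtain ⟨a', ha', hba'⟩ := not_bddBelow_iff.mp hsA b
  have : b ∈ s := hs.out ha' ha ⟨hba'.le, hab.le⟩
  exact (eq_empty_iff_forall_notMem.mp hst b) ⟨this, hb⟩

lemma aux_real_no_three {A B C : Set ℝ} (hA : A.OrdConnected) (hB : B.OrdConnected)
    (hC : C.OrdConnected) (uA : ¬BddAbove A ∨ ¬BddBelow A) (uB : ¬BddAbove B ∨ ¬BddBelow B)
    (uC : ¬BddAbove C ∨ ¬BddBelow C) (hAB : A ∩ B = ∅) (hAC : A ∩ C = ∅) (hBC : B ∩ C = ∅) :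
    False := by
  rcases uA with uA | uA <;> rcases uB with uB | uB <;> rcases uC with uC | uC
  · exact aux_pair_above hA uA uB hAB
  · exact aux_pair_above hA uA uB hAB
  · exact aux_pair_above hA uA uC hAC
  · exact aux_pair_below hB uB uC hBC
  · exact aux_pair_above hB uB uC hBC
  · exact aux_pair_below hA uA uC hAC
  · exact aux_pair_below hA uA uB hAB
  · exact aux_pair_below hA uA uB hAB

noncomputable section

instance : Fact (Module.finrank ℝ (EuclideanSpace ℝ (Fin 2)) = 1 + 1) :=
  ⟨by simp [finrank_euclideanSpace_fin]⟩

/-- homeomorphism from 1-dim euclidean space to ℝ -/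
def auxE1R : EuclideanSpace ℝ (Fin 1) ≃ₜ ℝ :=
  (EuclideanSpace.equiv (Fin 1) ℝ).toHomeomorph.trans (Homeomorph.funUnique (Fin 1) ℝ)

section SphereLemmas

abbrev SPH := (Metric.sphere (0 : EuclideanSpace ℝ (Fin 2)) 1)

lemma aux_sphere_no_three (q : SPH) {A B C : Set SPH}
    (hA : IsPreconnected A) (hB : IsPreconnected B) (hC : IsPreconnected C)
    (hqA : q ∉ A) (hqB : q ∉ B) (hqC : q ∉ C)
    (hclA : q ∈ closure A) (hclB : q ∈ closure B) (hclC : q ∈ closure C)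
    (hAB : A ∩ B = ∅) (hAC : A ∩ C = ∅) (hBC : B ∩ C = ∅) : False := by
  set h := stereographic' 1 q with hdef
  set ψ : SPH → ℝ := fun z => auxE1R (h z) with hψdef
  have hsource : h.source = {q}ᶜ := stereographic'_source q
  have htarget : h.target = univ := stereographic'_target q
  have hψcont : ContinuousOn ψ h.source :=
    auxE1R.continuous.comp_continuousOn h.continuousOn
  set g : ℝ → SPH := fun t => h.symm (auxE1R.symm t) with hgdef
  have hgcont : Continuous g := by
    have h1 : ContinuousOn h.symm h.target := h.continuousOn_symm
    rw [htarget] at h1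
    exact (continuousOn_univ.mp h1).comp auxE1R.symm.continuous
  have hgψ : ∀ z ∈ h.source, g (ψ z) = z := by
    intro z hz
    simp only [hgdef, hψdef, Homeomorph.symm_apply_apply]
    exact h.left_inv hz
  have hginj : ∀ a ∈ h.source, ∀ b ∈ h.source, ψ a = ψ b → a = b := by
    intro a ha b hb hab
    have := congrArg g hab
    rwa [hgψ a ha, hgψ b hb] at this
  -- key : unboundedness
  have key : ∀ T : Set SPH, IsPreconnected T → q ∉ T → q ∈ closure T →
      (¬BddAbove (ψ '' T) ∨ ¬BddBelow (ψ '' T)) := by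
    intro T hT hqT hclT
    by_contra hcon
    push_neg at hcon
    obtain ⟨⟨M, hM⟩, ⟨m, hm⟩⟩ := hcon
    set K : Set SPH := g '' (Icc m M) with hK
    have hKcomp : IsCompact K := isCompact_Icc.image hgcont
    have hTsrc : T ⊆ h.source := by
      rw [hsource]; intro z hz hzq
      rw [mem_singleton_iff] at hzq; exact hqT (hzq ▸ hz)
    have hTK : T ⊆ K := by
      intro z hz
      have hzs : z ∈ h.source := hTsrc hz
      have h1 : ψ z ∈ Icc m M := ⟨hm (mem_image_of_mem ψ hz), hM (mem_image_of_mem ψ hz)⟩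
      exact ⟨ψ z, h1, hgψ z hzs⟩
    have hqK : q ∈ K := (hKcomp.isClosed.closure_subset_iff.mpr hTK) hclT
    obtain ⟨t, -, hgt⟩ := hqK
    have : g t ∈ h.source := h.map_target (by rw [htarget]; trivial)
    rw [hgt, hsource] at this
    exact this rfl
  have himgdisj : ∀ {T U : Set SPH}, T ∩ U = ∅ → q ∉ T → q ∉ U → ψ '' T ∩ ψ '' U = ∅ := by
    intro T U hTU hqT hqU
    rw [eq_empty_iff_forall_notMem]
    rintro t ⟨⟨a, ha, rfl⟩, ⟨b, hb, hba⟩⟩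
    have haS : a ∈ h.source := by
      rw [hsource]; intro hq; rw [mem_singleton_iff] at hq; exact hqT (hq ▸ ha)
    have hbS : b ∈ h.source := by
      rw [hsource]; intro hq; rw [mem_singleton_iff] at hq; exact hqU (hq ▸ hb)
    have := hginj b hbS a haS hba
    exact (eq_empty_iff_forall_notMem.mp hTU a) ⟨ha, this ▸ hb⟩
  have himgconn : ∀ {T : Set SPH}, IsPreconnected T → q ∉ T → (ψ '' T).OrdConnected := by
    intro T hT hqT
    refine IsPreconnected.ordConnected (hT.image ψ (hψcont.mono ?_))
    rw [hsource]; intro z hz hzq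
    rw [mem_singleton_iff] at hzq; exact hqT (hzq ▸ hz)
  exact aux_real_no_three (himgconn hA hqA) (himgconn hB hqB) (himgconn hC hqC)
    (key A hA hqA hclA) (key B hB hqB hclB) (key C hC hqC hclC)
    (himgdisj hAB hqA hqB) (himgdisj hAC hqA hqC) (himgdisj hBC hqB hqC)


lemma aux_sphere_small (p : SPH) {δ : ℝ} (hδ : 0 < δ) :
    ∃ p₁ p₂ : SPH, p₁ ≠ p ∧ p₂ ≠ p ∧
      ∀ T : Set SPH, IsPreconnected T → p ∈ T → (∀ z ∈ T, z ≠ p₁ ∧ z ≠ p₂) →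
        T ⊆ Metric.ball p δ := by
  set q : SPH := -p with hq
  have hpq : p ≠ q := by
    intro hcontra
    have h1 : (p : EuclideanSpace ℝ (Fin 2)) = -(p : EuclideanSpace ℝ (Fin 2)) := by
      rw [hq] at hcontra
      have := congrArg (Subtype.val) hcontra
      simpa using this
    have h2 : (2:ℝ) • (p : EuclideanSpace ℝ (Fin 2)) = 0 := by
      rw [two_smul]
      rw [eq_neg_iff_add_eq_zero] at h1
      exact h1
    have h3 : (p : EuclideanSpace ℝ (Fin 2)) = 0 := by
      rcases smul_eq_zero.mp h2 with h | h
      · norm_num at h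
      · exact h
    have h4 : ‖(p : EuclideanSpace ℝ (Fin 2))‖ = 1 := by
      have := p.2
      rwa [mem_sphere_zero_iff_norm] at this
    rw [h3] at h4
    simp at h4
  set h := stereographic' 1 q with hdef
  set ψ : SPH → ℝ := fun z => auxE1R (h z) with hψdef
  have hsource : h.source = {q}ᶜ := stereographic'_source q
  have htarget : h.target = univ := stereographic'_target q
  have hψcont : ContinuousOn ψ h.source :=
    auxE1R.continuous.comp_continuousOn h.continuousOn
  set g : ℝ → SPH := fun t => h.symm (auxE1R.symm t) with hgdef
  have hgcont : Continuous g := by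
    have h1 : ContinuousOn h.symm h.target := h.continuousOn_symm
    rw [htarget] at h1
    exact (continuousOn_univ.mp h1).comp auxE1R.symm.continuous
  have hgsrc : ∀ t, g t ∈ h.source := fun t => h.map_target (by rw [htarget]; trivial)
  have hgψ : ∀ z ∈ h.source, g (ψ z) = z := by
    intro z hz
    simp only [hgdef, hψdef, Homeomorph.symm_apply_apply]
    exact h.left_inv hz
  have hψg : ∀ t, ψ (g t) = t := by
    intro t
    simp only [hgdef, hψdef]
    rw [h.right_inv (by rw [htarget]; trivial)]
    simp
  have hpsrc : p ∈ h.source := by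
    rw [hsource]
    simpa using hpq
  set c₀ : ℝ := ψ p with hc₀
  have hgc₀ : g c₀ = p := hgψ p hpsrc
  -- continuity of g at c₀
  obtain ⟨ε₀, hε₀pos, hε₀⟩ := Metric.continuousAt_iff.mp hgcont.continuousAt (ε := δ) hδ
  set ε : ℝ := ε₀ / 2 with hεdef
  have hεpos : 0 < ε := by positivity
  set p₁ : SPH := g (c₀ - ε) with hp₁def
  set p₂ : SPH := g (c₀ + ε) with hp₂def
  have hψp₁ : ψ p₁ = c₀ - ε := hψg _
  have hψp₂ : ψ p₂ = c₀ + ε := hψg _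
  refine ⟨p₁, p₂, ?_, ?_, ?_⟩
  · intro hcontra
    rw [hcontra] at hψp₁
    rw [← hc₀] at hψp₁
    linarith
  · intro hcontra
    rw [hcontra] at hψp₂
    rw [← hc₀] at hψp₂
    linarith
  · intro T hT hpT havoid
    set D : Set SPH := h.source ∩ ψ ⁻¹' (Ioo (c₀ - ε) (c₀ + ε)) with hDdef
    set K : Set SPH := g '' (Icc (c₀ - ε) (c₀ + ε)) with hKdef
    set Eo : Set SPH := Kᶜ ∪ (h.source ∩ ψ ⁻¹' ((Icc (c₀ - ε) (c₀ + ε))ᶜ)) with hEodef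
    have hKcomp : IsCompact K := isCompact_Icc.image hgcont
    have hDopen : IsOpen D :=
      ContinuousOn.isOpen_inter_preimage hψcont h.open_source isOpen_Ioo
    have hEopen : IsOpen Eo :=
      (hKcomp.isClosed.isOpen_compl).union
        (ContinuousOn.isOpen_inter_preimage hψcont h.open_source isClosed_Icc.isOpen_compl)
    have hDK : D ⊆ K := by
      rintro z ⟨hzs, hzIoo⟩
      exact ⟨ψ z, ⟨(mem_preimage.mp hzIoo).1.le, (mem_preimage.mp hzIoo).2.le⟩, hgψ z hzs⟩
    have hDE : D ∩ Eo = ∅ := by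
      rw [eq_empty_iff_forall_notMem]
      rintro z ⟨hzD, hzE⟩
      rcases hzE with hzE | hzE
      · exact hzE (hDK hzD)
      · have h1 := mem_preimage.mp hzD.2
        have h2 := mem_preimage.mp hzE.2
        exact h2 ⟨h1.1.le, h1.2.le⟩
    have hcover : T ⊆ D ∪ Eo := by
      intro z hz
      obtain ⟨hz1, hz2⟩ := havoid z hz
      by_cases hzK : z ∈ K
      · obtain ⟨t, htI, rfl⟩ := hzK
        have hts : g t ∈ h.source := hgsrc t
        rcases lt_or_eq_of_le htI.1 with h1 | h1
        · rcases lt_or_eq_of_le htI.2 with h2 | h2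
          · exact Or.inl ⟨hts, by rw [mem_preimage, hψg]; exact ⟨h1, h2⟩⟩
          · exact absurd (by rw [h2]) hz2
        · exact absurd (by rw [← h1]) hz1
      · exact Or.inr (Or.inl hzK)
    have hpD : p ∈ D := by
      refine ⟨hpsrc, ?_⟩
      rw [mem_preimage, ← hc₀]
      constructor <;> [linarith; linarith]
    have hTD : T ⊆ D := by
      by_contra hcon
      obtain ⟨z, hzT, hzD⟩ := not_subset.mp hcon
      have hzE : z ∈ Eo := (hcover hzT).resolve_left hzD
      obtain ⟨w, hwT, hwDE⟩ := hT D Eo hDopen hEopen hcover ⟨p, hpT, hpD⟩ ⟨z, hzT, hzE⟩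
      exact (eq_empty_iff_forall_notMem.mp hDE w) hwDE
    intro z hz
    obtain ⟨hzs, hzIoo⟩ := hTD hz
    have h1 := mem_preimage.mp hzIoo
    have hd : dist (ψ z) c₀ < ε₀ := by
      rw [Real.dist_eq, abs_lt]
      constructor <;> [linarith [h1.1]; linarith [h1.2]]
    have := hε₀ hd
    rw [hgc₀, hgψ z hzs] at this
    exact mem_ball.mpr this

end SphereLemmas
end


/-- Every Darboux injection `f : X → S¹` from a nonempty connected compact metrizable
space `X` to the circle is a topological embedding. -/
theorem darboux_injection_to_circle_isEmbedding {X : Type*} [TopologicalSpace X]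
    [CompactSpace X] [ConnectedSpace X] [TopologicalSpace.MetrizableSpace X] [Nonempty X]
    (f : X → (Metric.sphere (0 : EuclideanSpace ℝ (Fin 2)) 1))
    (hinj : Function.Injective f)
    (hdarboux : ∀ C : Set X, IsPreconnected C → IsPreconnected (f '' C)) :
    Topology.IsEmbedding f := by
  have hcont : Continuous f := by
    rw [continuous_iff_continuousAt]
    intro y₀
    rw [ContinuousAt, Metric.tendsto_nhds]
    intro δ hδ
    obtain ⟨p₁, p₂, hp₁, hp₂, hcrit⟩ := aux_sphere_small (f y₀) hδ
    by_cases hGA : (f ⁻¹' {p₁, p₂}) = ∅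
    · have h1 : f '' univ ⊆ Metric.ball (f y₀) δ := by
        refine hcrit _ (hdarboux univ isPreconnected_univ) ⟨y₀, trivial, rfl⟩ ?_
        rintro z ⟨x, -, rfl⟩
        constructor
        · intro h
          exact (eq_empty_iff_forall_notMem.mp hGA x) (by rw [mem_preimage, h]; exact Or.inl rfl)
        · intro h
          exact (eq_empty_iff_forall_notMem.mp hGA x) (by rw [mem_preimage, h]; exact Or.inr rfl)
      refine Filter.Eventually.of_forall fun z => ?_
      have := h1 ⟨z, trivial, rfl⟩
      rwa [mem_ball] at this
    · set GA : Set X := f ⁻¹' {p₁, p₂} with hGAdef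
      have hGAfin : GA.Finite := by
        have h1 : GA = f ⁻¹' {p₁} ∪ f ⁻¹' {p₂} := by
          rw [hGAdef]; ext x; simp [mem_preimage]
        rw [h1]
        refine Set.Finite.union ?_ ?_ <;>
          exact Set.Subsingleton.finite fun a ha b hb => hinj (ha.trans hb.symm)
      set W : Set X := GAᶜ with hWdef
      have hWopen : IsOpen W := hGAfin.isClosed.isOpen_compl
      have hy₀W : y₀ ∈ W := by
        rw [hWdef, mem_compl_iff, hGAdef, mem_preimage]
        rintro (h | h)
        · exact hp₁ h.symm
        · exact hp₂ h.symm
      have hWne : W ≠ univ := by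
        intro hcontra
        obtain ⟨a, ha⟩ := nonempty_iff_ne_empty.mpr hGA
        have : a ∈ W := hcontra ▸ trivial
        exact this ha
      set 𝒞 : Set (Set X) := {C | ∃ z ∈ W, connectedComponentIn W z = C} with h𝒞def
      have hmem𝒞 : ∀ C ∈ 𝒞, ∃ z ∈ W, connectedComponentIn W z = C := fun C hC => hC
      have hsubW : ∀ C ∈ 𝒞, C ⊆ W := by
        rintro C ⟨z, hzW, rfl⟩; exact connectedComponentIn_subset W z
      have hpc𝒞 : ∀ C ∈ 𝒞, IsPreconnected C := by
        rintro C ⟨z, hzW, rfl⟩; exact isPreconnected_connectedComponentIn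
      have hne𝒞 : ∀ C ∈ 𝒞, C.Nonempty := by
        rintro C ⟨z, hzW, rfl⟩; exact ⟨z, mem_connectedComponentIn hzW⟩
      have hrel : ∀ C ∈ 𝒞, closure C ∩ W ⊆ C := by
        rintro C ⟨z, hzW, rfl⟩
        rintro w ⟨hwcl, hwW⟩
        have hpc : IsPreconnected (connectedComponentIn W z ∪ {w}) :=
          isPreconnected_connectedComponentIn.subset_closure subset_union_left
            (union_subset subset_closure (by simpa using hwcl))
        have hsub : connectedComponentIn W z ∪ {w} ⊆ connectedComponentIn W z :=
          hpc.subset_connectedComponentIn (Or.inl (mem_connectedComponentIn hzW))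
            (union_subset (connectedComponentIn_subset W z) (by simpa using hwW))
        exact hsub (Or.inr rfl)
      have hdistinct : ∀ C ∈ 𝒞, ∀ C' ∈ 𝒞, (C ∩ C').Nonempty → C = C' := by
        rintro C ⟨z, hzW, rfl⟩ C' ⟨z', hz'W, rfl⟩ ⟨w, hw, hw'⟩
        rw [connectedComponentIn_eq hw, connectedComponentIn_eq hw']
      have hdisjim : ∀ C ∈ 𝒞, ∀ C' ∈ 𝒞, C ≠ C' → f '' C ∩ f '' C' = ∅ := by
        intro C hC C' hC' hne
        rw [eq_empty_iff_forall_notMem]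
        rintro t ⟨⟨u, hu, rfl⟩, ⟨v, hv, hvu⟩⟩
        exact hne (hdistinct C hC C' hC' ⟨u, hu, (hinj hvu) ▸ hv⟩)
      have hclim : ∀ C ∈ 𝒞, ∀ a ∈ GA, a ∈ closure C → f a ∈ closure (f '' C) := by
        intro C hC a haGA hacl
        have haC : a ∉ C := fun h => (hsubW C hC h) haGA
        have hpc : IsPreconnected (C ∪ {a}) :=
          (hpc𝒞 C hC).subset_closure subset_union_left
            (union_subset subset_closure (by simpa using hacl))
        have himg : f '' (C ∪ {a}) = f '' C ∪ {f a} := by rw [image_union, image_singleton]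
        refine aux_mem_closure_of_preconnected_union (himg ▸ hdarboux _ hpc) ?_ ?_
        · rintro ⟨w, hwC, hwa⟩
          exact haC ((hinj hwa) ▸ hwC)
        · obtain ⟨z, hz⟩ := hne𝒞 C hC
          exact ⟨f z, mem_image_of_mem f hz⟩
      have hqnotim : ∀ C ∈ 𝒞, ∀ a ∈ GA, f a ∉ f '' C := by
        rintro C hC a haGA ⟨w, hwC, hwa⟩
        exact (hsubW C hC hwC) ((hinj hwa) ▸ haGA)
      have hattach : ∀ C ∈ 𝒞, ∃ a ∈ GA, a ∈ closure C := by
        rintro C ⟨z, hzW, rfl⟩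
        obtain ⟨a, haU, hacl⟩ := aux_open_bump hWopen hWne hzW
        exact ⟨a, by simpa [hWdef] using haU, hacl⟩
      have hfiber : ∀ a ∈ GA, {C | C ∈ 𝒞 ∧ a ∈ closure C}.Finite := by
        intro a haGA
        by_cases hss : {C | C ∈ 𝒞 ∧ a ∈ closure C}.Subsingleton
        · exact hss.finite
        · obtain ⟨C₁, hC₁, C₂, hC₂, h12⟩ := Set.not_subsingleton_iff.mp hss
          refine Set.Finite.subset ((Set.finite_singleton C₂).insert C₁) ?_
          intro C₃ hC₃
          by_contra hC₃mem
          simp only [mem_insert_iff, mem_singleton_iff, not_or] at hC₃mem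
          obtain ⟨h31, h32⟩ := hC₃mem
          exact aux_sphere_no_three (f a)
            (hdarboux _ (hpc𝒞 C₁ hC₁.1)) (hdarboux _ (hpc𝒞 C₂ hC₂.1)) (hdarboux _ (hpc𝒞 C₃ hC₃.1))
            (hqnotim C₁ hC₁.1 a haGA) (hqnotim C₂ hC₂.1 a haGA) (hqnotim C₃ hC₃.1 a haGA)
            (hclim C₁ hC₁.1 a haGA hC₁.2) (hclim C₂ hC₂.1 a haGA hC₂.2)
            (hclim C₃ hC₃.1 a haGA hC₃.2)
            (hdisjim C₁ hC₁.1 C₂ hC₂.1 h12) (hdisjim C₁ hC₁.1 C₃ hC₃.1 (Ne.symm h31))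
            (hdisjim C₂ hC₂.1 C₃ hC₃.1 (Ne.symm h32))
      have h𝒞fin : 𝒞.Finite := by
        refine Set.Finite.subset (Set.Finite.biUnion hGAfin hfiber) ?_
        intro C hC
        obtain ⟨a, haGA, hacl⟩ := hattach C hC
        exact mem_biUnion haGA ⟨hC, hacl⟩
      set C₀ : Set X := connectedComponentIn W y₀ with hC₀def
      have hC₀𝒞 : C₀ ∈ 𝒞 := ⟨y₀, hy₀W, rfl⟩
      have hy₀C₀ : y₀ ∈ C₀ := mem_connectedComponentIn hy₀W
      have hopen : IsOpen C₀ := by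
        have hfin' : (𝒞 \ {C₀}).Finite := h𝒞fin.diff
        have hUc : C₀ = W ∩ (closure (⋃ C ∈ 𝒞 \ {C₀}, C))ᶜ := by
          apply Subset.antisymm
          · intro z hz
            refine ⟨connectedComponentIn_subset W y₀ hz, ?_⟩
            intro hzcl
            rw [hfin'.closure_biUnion] at hzcl
            obtain ⟨C, hC, hzC⟩ := mem_iUnion₂.mp hzcl
            have hzC' : z ∈ C := hrel C hC.1 ⟨hzC, connectedComponentIn_subset W y₀ hz⟩
            exact hC.2 (hdistinct C hC.1 C₀ hC₀𝒞 ⟨z, hzC', hz⟩)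
          · rintro z ⟨hzW, hzcl⟩
            have hCz𝒞 : connectedComponentIn W z ∈ 𝒞 := ⟨z, hzW, rfl⟩
            by_cases heq : connectedComponentIn W z = C₀
            · exact heq ▸ mem_connectedComponentIn hzW
            · exfalso
              apply hzcl
              apply subset_closure
              exact mem_biUnion (⟨hCz𝒞, heq⟩ : _ ∈ 𝒞 \ {C₀}) (mem_connectedComponentIn hzW)
        rw [hUc]
        exact hWopen.inter isClosed_closure.isOpen_compl
      have himgball : ∀ z ∈ C₀, dist (f z) (f y₀) < δ := by
        have hsub : f '' C₀ ⊆ Metric.ball (f y₀) δ := by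
          refine hcrit _ (hdarboux _ (hpc𝒞 C₀ hC₀𝒞)) ⟨y₀, hy₀C₀, rfl⟩ ?_
          rintro t ⟨w, hwC₀, rfl⟩
          have hwW : w ∈ W := hsubW C₀ hC₀𝒞 hwC₀
          constructor
          · intro h; exact hwW (by rw [hGAdef, mem_preimage, h]; exact Or.inl rfl)
          · intro h; exact hwW (by rw [hGAdef, mem_preimage, h]; exact Or.inr rfl)
        intro z hz
        have := hsub ⟨z, hz, rfl⟩
        rwa [mem_ball] at this
      exact Filter.eventually_iff_exists_mem.mpr ⟨C₀, hopen.mem_nhds hy₀C₀, himgball⟩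
  exact (hcont.isClosedEmbedding hinj).toIsEmbedding
end

section
/- Let f : X → Y be a Darboux map from a regular topological space X to a topological space Y, and let S ⊆ Y be a set that separates the image f(X), i.e., f(X) \ S is disconnected. Then the preimage f⁻¹(S) contains a closed, nowhere dense subset L of X such that X \ L is disconnected. -/
/-- Let `f : X → Y` be a Darboux map from a regular topological space `X` to a
topological space `Y`, and let `S ⊆ Y` separate the image `f(X)`, i.e. `f(X) \ S`
is disconnected. Then `f ⁻¹' S` contains a closed nowhere dense subset `L` of `X`
such that `X \ L` is disconnected. -/
theorem darboux_preimage_of_separator {X Y : Type*} [TopologicalSpace X] [RegularSpace X]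
    [TopologicalSpace Y] (f : X → Y)
    (hdarboux : ∀ C : Set X, IsPreconnected C → IsPreconnected (f '' C))
    (S : Set Y) (hsep : ¬ IsPreconnected (Set.range f \ S)) :
    ∃ L : Set X, L ⊆ f ⁻¹' S ∧ IsClosed L ∧ IsNowhereDense L ∧
      ¬ IsPreconnected (Lᶜ) := by
  set F := f ⁻¹' S with hFdef
  have himg : f '' Fᶜ = Set.range f \ S := by
    rw [hFdef, ← Set.preimage_compl, Set.image_preimage_eq_inter_range,
      Set.diff_eq, Set.inter_comm]
  have hnc : ¬ IsPreconnected Fᶜ := fun h => hsep (himg ▸ hdarboux _ h)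
  rw [IsPreconnected] at hnc
  push_neg at hnc
  obtain ⟨u, v, hu, hv, hsub, hne1, hne2, hcap⟩ := hnc
  by_cases hint : interior F = ∅
  · -- Case: F has empty interior
    refine ⟨(u ∪ v)ᶜ, ?_, (hu.union hv).isClosed_compl, ?_, ?_⟩
    · have := Set.compl_subset_compl.mpr hsub
      rwa [compl_compl] at this
    · rw [((hu.union hv).isClosed_compl).isNowhereDense_iff]
      have h1 : (u ∪ v)ᶜ ⊆ F := by
        have := Set.compl_subset_compl.mpr hsub
        rwa [compl_compl] at this
      have := interior_mono h1
      rw [hint] at this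
      exact Set.subset_empty_iff.mp this
    · rw [compl_compl]
      intro h
      have huv : u ∩ v ⊆ F := by
        intro z hz
        by_contra hzF
        exact Set.eq_empty_iff_forall_notMem.mp hcap z ⟨hzF, hz⟩
      have huv2 : u ∩ v = ∅ := by
        have := interior_mono huv
        rw [hint, (hu.inter hv).interior_eq] at this
        exact Set.subset_empty_iff.mp this
      obtain ⟨z, hz⟩ := h u v hu hv subset_rfl
        ⟨hne1.choose, hsub hne1.choose_spec.1, hne1.choose_spec.2⟩
        ⟨hne2.choose, hsub hne2.choose_spec.1, hne2.choose_spec.2⟩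
      exact absurd (huv2 ▸ hz.2 : z ∈ (∅ : Set X)) (Set.notMem_empty z)
  · -- Case: F has a point in its interior
    obtain ⟨x, hx⟩ := Set.nonempty_iff_ne_empty.mpr hint
    obtain ⟨N, hNx, hNc, hNs⟩ :=
      exists_mem_nhds_isClosed_subset (isOpen_interior.mem_nhds hx)
    refine ⟨N \ interior N, ?_, hNc.sdiff isOpen_interior, ?_, ?_⟩
    · exact fun z hz => interior_subset (hNs hz.1)
    · rw [(hNc.sdiff isOpen_interior).isNowhereDense_iff]
      rw [Set.eq_empty_iff_forall_notMem]
      intro z hz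
      have h1 : z ∈ interior N := interior_mono Set.diff_subset hz
      exact (interior_subset hz).2 h1
    · intro h
      have hxN : x ∈ interior N := mem_interior_iff_mem_nhds.mpr hNx
      obtain ⟨y, hyF, _⟩ := hne1
      have hyN : y ∉ N := fun hyN => hyF (interior_subset (hNs hyN))
      obtain ⟨z, hz1, hz2, hz3⟩ := h (interior N) Nᶜ isOpen_interior hNc.isOpen_compl
        (by intro w hw
            by_cases hwN : w ∈ N
            · exact Or.inl (by_contra fun hwi => hw ⟨hwN, hwi⟩)
            · exact Or.inr hwN)
        ⟨x, fun hxL => hxL.2 hxN, hxN⟩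
        ⟨y, fun hyL => hyN hyL.1, hyN⟩
      exact hz3 (interior_subset hz2)
end

section
/- Let X be a Peano continuum, let a, b ∈ X be two distinct points, and let C ⊆ X be a closed set such that a and b lie in different connected components of X \ C. Then there exists a closed set M ⊆ C such that a and b lie in different connected components of X \ M and M is an irreducible separator between a and b: every closed subset F ⊆ M such that a and b lie in different connected components of X \ F is equal to M. -/
open Set

lemma chain_inter_separates {X : Type*} [TopologicalSpace X] [LocallyConnectedSpace X]
    (a b : X) (c : Set (Set X)) (hne : c.Nonempty) (hchain : IsChain (· ⊆ ·) c)
    (hcl : ∀ F ∈ c, IsClosed F)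
    (hma : ∀ F ∈ c, a ∉ F) (hmb : ∀ F ∈ c, b ∉ F)
    (hsep : ∀ F ∈ c, connectedComponentIn Fᶜ a ≠ connectedComponentIn Fᶜ b) :
    connectedComponentIn (⋂₀ c)ᶜ a ≠ connectedComponentIn (⋂₀ c)ᶜ b := by
  intro heq
  set M : Set X := ⋂₀ c with hM
  have hMclosed : IsClosed M := isClosed_sInter hcl
  have haM : a ∈ Mᶜ := by
    obtain ⟨F, hF⟩ := hne
    intro h; exact hma F hF (mem_sInter.1 h F hF)
  have hbM : b ∈ Mᶜ := by
    obtain ⟨F, hF⟩ := hne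
    intro h; exact hmb F hF (mem_sInter.1 h F hF)
  set U := connectedComponentIn Mᶜ a with hU
  have hbU : b ∈ U := by
    rw [heq]; exact mem_connectedComponentIn hbM
  set V : Set X := ⋃ F ∈ c, connectedComponentIn Fᶜ a with hV
  have hVopen : IsOpen V :=
    isOpen_biUnion fun F hF => (hcl F hF).isOpen_compl.connectedComponentIn
  have hVU : V ⊆ U := by
    refine iUnion₂_subset fun F hF => ?_
    exact connectedComponentIn_mono a (compl_subset_compl.2 (sInter_subset_of_mem hF))
  have haV : a ∈ V := by
    obtain ⟨F, hF⟩ := hne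
    exact mem_biUnion hF (mem_connectedComponentIn (hma F hF))
  -- key: U ∩ closure V ⊆ V
  have hkey : U ∩ closure V ⊆ V := by
    rintro x ⟨hxU, hxcl⟩
    have hxM : x ∈ Mᶜ := connectedComponentIn_subset _ _ hxU
    obtain ⟨F₀, hF₀c, hxF₀⟩ : ∃ F₀ ∈ c, x ∉ F₀ := by
      by_contra h
      push_neg at h
      exact hxM (mem_sInter.2 h)
    set W := connectedComponentIn F₀ᶜ x with hW
    have hWopen : IsOpen W := (hcl F₀ hF₀c).isOpen_compl.connectedComponentIn
    have hxW : x ∈ W := mem_connectedComponentIn hxF₀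
    obtain ⟨y, hyW, hyV⟩ : (W ∩ V).Nonempty := by
      rcases (mem_closure_iff.1 hxcl) W hWopen hxW with ⟨y, hy⟩
      exact ⟨y, hy⟩
    obtain ⟨F₁, hF₁c, hyc⟩ : ∃ F₁ ∈ c, y ∈ connectedComponentIn F₁ᶜ a := by
      simpa [hV] using hyV
    -- take the smaller of F₀, F₁
    obtain ⟨F₂, hF₂c, h20, h21⟩ : ∃ F₂ ∈ c, F₂ ⊆ F₀ ∧ F₂ ⊆ F₁ := by
      rcases hchain.total hF₀c hF₁c with h | h
      · exact ⟨F₀, hF₀c, subset_rfl, h⟩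
      · exact ⟨F₁, hF₁c, h, subset_rfl⟩
    have hyA : y ∈ connectedComponentIn F₂ᶜ a :=
      connectedComponentIn_mono a (compl_subset_compl.2 h21) hyc
    have hWsub : W ⊆ connectedComponentIn F₂ᶜ y := by
      apply isPreconnected_connectedComponentIn.subset_connectedComponentIn hyW
      exact (connectedComponentIn_subset _ _).trans (compl_subset_compl.2 h20)
    have : x ∈ connectedComponentIn F₂ᶜ a := by
      rw [connectedComponentIn_eq hyA]
      exact hWsub hxW
    exact mem_biUnion hF₂c this
  -- U connected, V nonempty open, closed in U ⇒ U ⊆ V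
  have hUV : U ⊆ V := by
    have hUpre : IsPreconnected U := isPreconnected_connectedComponentIn
    by_contra hnot
    have h1 : U ⊆ V ∪ (closure V)ᶜ := by
      intro x hx
      by_cases hxc : x ∈ closure V
      · exact Or.inl (hkey ⟨hx, hxc⟩)
      · exact Or.inr hxc
    have h2 : (U ∩ V).Nonempty := ⟨a, mem_connectedComponentIn haM, haV⟩
    have h3 : (U ∩ (closure V)ᶜ).Nonempty := by
      rcases not_subset.1 hnot with ⟨x, hxU, hxV⟩
      exact ⟨x, hxU, fun hx => hxV (hkey ⟨hxU, hx⟩)⟩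
    obtain ⟨x, -, hxV, hxcl⟩ := hUpre V (closure V)ᶜ hVopen isClosed_closure.isOpen_compl h1 h2 h3
    exact hxcl (subset_closure hxV)
  obtain ⟨F, hFc, hbF⟩ : ∃ F ∈ c, b ∈ connectedComponentIn Fᶜ a := by
    simpa [hV] using hUV hbU
  exact hsep F hFc (connectedComponentIn_eq hbF)

/-- Let `X` be a Peano continuum (a nonempty connected, locally connected, compact
metrizable space), let `a ≠ b` be points of `X`, and let `C ⊆ X` be a closed set
such that `a` and `b` lie in different connected components of `X \ C`. Then `C`
contains a closed set `M` which is an irreducible separator of `X` between `a` and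
`b`: the points `a, b` lie in different connected components of `X \ M`, and every
closed subset `F ⊆ M` separating `a` from `b` in this sense equals `M`. -/
theorem exists_irreducible_separator {X : Type*} [TopologicalSpace X] [CompactSpace X]
    [ConnectedSpace X] [LocallyConnectedSpace X] [TopologicalSpace.MetrizableSpace X]
    [Nonempty X]
    (a b : X) (hab : a ≠ b) (C : Set X) (hC : IsClosed C)
    (ha : a ∉ C) (hb : b ∉ C)
    (hsep : connectedComponentIn Cᶜ a ≠ connectedComponentIn Cᶜ b) :
    ∃ M ⊆ C, IsClosed M ∧
      connectedComponentIn Mᶜ a ≠ connectedComponentIn Mᶜ b ∧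
      ∀ F ⊆ M, IsClosed F →
        connectedComponentIn Fᶜ a ≠ connectedComponentIn Fᶜ b → F = M := by
  set S : Set (Set X) := {F | F ⊆ C ∧ IsClosed F ∧
    connectedComponentIn Fᶜ a ≠ connectedComponentIn Fᶜ b} with hS
  have hCS : C ∈ S := ⟨subset_rfl, hC, hsep⟩
  have hH : ∀ c ⊆ S, IsChain (· ⊆ ·) c → c.Nonempty → ∃ lb ∈ S, ∀ s ∈ c, lb ⊆ s := by
    intro c hcS hchain hcne
    have hsub : ⋂₀ c ⊆ C := by
      obtain ⟨F, hF⟩ := hcne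
      exact (sInter_subset_of_mem hF).trans (hcS hF).1
    exact ⟨⋂₀ c, ⟨hsub, isClosed_sInter fun F hF => (hcS hF).2.1,
      chain_inter_separates a b c hcne hchain (fun F hF => (hcS hF).2.1)
        (fun F hF h => ha ((hcS hF).1 h)) (fun F hF h => hb ((hcS hF).1 h))
        (fun F hF => (hcS hF).2.2)⟩,
      fun s hs => sInter_subset_of_mem hs⟩
  obtain ⟨M, hMC, hMmin⟩ := zorn_superset_nonempty S hH C hCS
  obtain ⟨hMsub, hMcl, hMsep⟩ := hMmin.prop
  exact ⟨M, hMsub, hMcl, hMsep, fun F hFM hFcl hFsep =>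
    hMmin.eq_of_subset ⟨hFM.trans hMsub, hFcl, hFsep⟩ hFM⟩
end
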